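/- arXiv:1709.05891 — 2 statements merged into one kernel-verified Lean document; each statement's English description precedes it below -/
import Mathlib

section
/- Let T be the tree obtained from the rooted binary tree T₀ (one vertex of degree 2, all others of degree 3) by attaching a non-trivial finite path at the root. Then no self-embedding of T is hyperbolic. -/
open SimpleGraph

variable {V : Type*}

/-- `g` is a self-embedding of `G`: injective and adjacency-preserving. -/
def IsEmb (G : SimpleGraph V) (g : V → V) : Prop :=
  Function.Injective g ∧ ∀ u v : V, G.Adj u v → G.Adj (g u) (g v)

/-- A ray in `G`: a one-way infinite path. -/
structure GRay (G : SimpleGraph V) where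
  f : ℕ → V
  inj : Function.Injective f
  adj : ∀ n, G.Adj (f n) (f (n + 1))

/-- Two rays are equivalent (lie in the same end): for every vertex `v` they have
tails avoiding `v` lying in the same component of `G − v`. -/
def RayEquiv (G : SimpleGraph V) (R S : GRay G) : Prop :=
  ∀ v : V, ∃ m n : ℕ, (∀ i, m ≤ i → R.f i ≠ v) ∧ (∀ j, n ≤ j → S.f j ≠ v) ∧
    ∃ w : G.Walk (R.f m) (S.f n), v ∉ w.support

/-- `g` fixes the end represented by the ray `R`: the image ray is equivalent to `R`. -/
def FixesEnd (G : SimpleGraph V) (g : V → V) (R : GRay G) : Prop :=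
  ∃ S : GRay G, (∀ n, S.f n = g (R.f n)) ∧ RayEquiv G S R

def FixesVertex (g : V → V) : Prop := ∃ v, g v = v

/-- `g` fixes an edge setwise (possibly swapping its endpoints). -/
def FixesEdge (G : SimpleGraph V) (g : V → V) : Prop :=
  ∃ u v : V, G.Adj u v ∧ ((g u = u ∧ g v = v) ∨ (g u = v ∧ g v = u))

/-- `g` fixes setwise a non-empty finite subtree of `G`. -/
def FixesFiniteSubtree (G : SimpleGraph V) (g : V → V) : Prop :=
  ∃ S : Set V, S.Nonempty ∧ S.Finite ∧ (G.induce S).Connected ∧ g '' S = S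

/-- `R` is a ray with `g(R) ⊆ R`; for non-elliptic `g` its end is the direction `g⁺`. -/
def DirectionRay (G : SimpleGraph V) (g : V → V) (R : GRay G) : Prop :=
  ∀ n, ∃ m, g (R.f n) = R.f m

/-- `w` lies in the component of `G − x` containing the end of `R`. -/
def InComp (G : SimpleGraph V) (x : V) (R : GRay G) (w : V) : Prop :=
  ∃ m, (∀ i, m ≤ i → R.f i ≠ x) ∧ ∃ p : G.Walk w (R.f m), x ∉ p.support

/-- A sequence of vertices converges to the end represented by `R`. -/
def ConvergesTo (G : SimpleGraph V) (x : ℕ → V) (R : GRay G) : Prop :=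
  ∀ v : V, ∃ N : ℕ, ∀ n, N ≤ n → InComp G v R (x n)

/-- `M` is a submonoid of `Emb(G)`. -/
def IsEmbMonoid (G : SimpleGraph V) (M : Set (V → V)) : Prop :=
  (∀ g ∈ M, IsEmb G g) ∧ (id ∈ M) ∧ ∀ g ∈ M, ∀ h ∈ M, (g ∘ h) ∈ M

/-- The end of `R` is an accumulation point of the orbit of `v0` under `M`:
every basic neighbourhood of the end of `R` meets the orbit. -/
def InLimitSet (G : SimpleGraph V) (M : Set (V → V)) (v0 : V) (R : GRay G) : Prop :=
  ∀ x : V, ∃ g ∈ M, InComp G x R (g v0)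

/-- A self-embedding is elliptic if it fixes a vertex or an edge. -/
def Elliptic (G : SimpleGraph V) (g : V → V) : Prop := FixesVertex g ∨ FixesEdge G g

/-- `g` is hyperbolic: not elliptic and it fixes exactly two ends. -/
def Hyperbolic (G : SimpleGraph V) (g : V → V) : Prop :=
  ¬ Elliptic G g ∧ ∃ R1 R2 : GRay G, ¬ RayEquiv G R1 R2 ∧
    FixesEnd G g R1 ∧ FixesEnd G g R2 ∧
    ∀ S : GRay G, FixesEnd G g S → RayEquiv G S R1 ∨ RayEquiv G S R2

/-- `g` is parabolic: not elliptic and it fixes exactly one end. -/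
def Parabolic (G : SimpleGraph V) (g : V → V) : Prop :=
  ¬ Elliptic G g ∧ ∃ R : GRay G, FixesEnd G g R ∧
    ∀ S : GRay G, FixesEnd G g S → RayEquiv G S R

/-- Adjacency generating relation for the rooted binary tree (on `List Bool`, root `[]`)
with a path on `k + 1` further vertices attached at the root. -/
def relT (k : ℕ) : (List Bool ⊕ Fin (k + 1)) → (List Bool ⊕ Fin (k + 1)) → Prop
  | Sum.inl s, Sum.inl t => ∃ b, t = b :: s
  | Sum.inl s, Sum.inr i => s = [] ∧ (i : ℕ) = 0
  | Sum.inr i, Sum.inr j => (j : ℕ) = (i : ℕ) + 1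
  | _, _ => False

/-- The rooted binary tree with a non-trivial finite path attached at the root. -/
def TExample (k : ℕ) : SimpleGraph (List Bool ⊕ Fin (k + 1)) := SimpleGraph.fromRel (relT k)

namespace Aux

variable {k : ℕ}

lemma adj_iff {x y : List Bool ⊕ Fin (k+1)} :
    (TExample k).Adj x y ↔ x ≠ y ∧ (relT k x y ∨ relT k y x) := by
  simp [TExample, SimpleGraph.fromRel_adj]

lemma adj_inl_inl {s t : List Bool} :
    (TExample k).Adj (Sum.inl s) (Sum.inl t) ↔ (∃ b, t = b :: s) ∨ (∃ b, s = b :: t) := by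
  rw [adj_iff]
  constructor
  · rintro ⟨-, h | h⟩
    · exact Or.inl h
    · exact Or.inr h
  · rintro (⟨b, rfl⟩ | ⟨b, rfl⟩)
    · exact ⟨by simp [(List.cons_ne_self b s).symm], Or.inl ⟨b, rfl⟩⟩
    · exact ⟨by simp [List.cons_ne_self b t], Or.inr ⟨b, rfl⟩⟩

lemma adj_inl_inr {s : List Bool} {i : Fin (k+1)} :
    (TExample k).Adj (Sum.inl s) (Sum.inr i) ↔ s = [] ∧ (i : ℕ) = 0 := by
  rw [adj_iff]
  constructor
  · rintro ⟨-, h | h⟩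
    · exact h
    · exact h.elim
  · rintro ⟨rfl, hi⟩
    exact ⟨by simp, Or.inl ⟨rfl, hi⟩⟩

lemma adj_inr_inl {s : List Bool} {i : Fin (k+1)} :
    (TExample k).Adj (Sum.inr i) (Sum.inl s) ↔ s = [] ∧ (i : ℕ) = 0 := by
  rw [((TExample k).adj_comm _ _), adj_inl_inr]

lemma adj_inr_inr {i j : Fin (k+1)} :
    (TExample k).Adj (Sum.inr i) (Sum.inr j) ↔ (j : ℕ) = (i : ℕ) + 1 ∨ (i : ℕ) = (j : ℕ) + 1 := by
  rw [adj_iff]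
  constructor
  · rintro ⟨-, h | h⟩
    · exact Or.inl h
    · exact Or.inr h
  · rintro (h | h) <;>
    · refine ⟨?_, ?_⟩
      · intro he
        rw [Sum.inr.injEq] at he
        subst he
        omega
      · first | exact Or.inl h | exact Or.inr h

/-- parent map -/
def par (k : ℕ) : List Bool → (List Bool ⊕ Fin (k+1))
  | [] => Sum.inr 0
  | _ :: t => Sum.inl t

lemma adj_par (s : List Bool) : (TExample k).Adj (Sum.inl s) (par k s) := by
  cases s with
  | nil => rw [par, adj_inl_inr]; simp
  | cons b t => rw [par, adj_inl_inl]; exact Or.inr ⟨b, rfl⟩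

lemma nbr_char {u : List Bool} {p : List Bool ⊕ Fin (k+1)} :
    (TExample k).Adj (Sum.inl u) p ↔
      (p = Sum.inl (true :: u) ∨ p = Sum.inl (false :: u) ∨ p = par k u) := by
  constructor
  · intro h
    cases p with
    | inl t =>
      rw [adj_inl_inl] at h
      rcases h with ⟨b, rfl⟩ | ⟨b, hb⟩
      · cases b
        · exact Or.inr (Or.inl rfl)
        · exact Or.inl rfl
      · refine Or.inr (Or.inr ?_)
        rw [hb, par]
    | inr i =>
      rw [adj_inl_inr] at h
      obtain ⟨rfl, hi⟩ := h
      refine Or.inr (Or.inr ?_)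
      rw [par]
      congr 1
      exact Fin.ext (by simpa using hi)
  · rintro (rfl | rfl | rfl)
    · rw [adj_inl_inl]; exact Or.inl ⟨_, rfl⟩
    · rw [adj_inl_inl]; exact Or.inl ⟨_, rfl⟩
    · exact adj_par u

lemma par_ne_cons {u : List Bool} {b : Bool} : par k u ≠ Sum.inl (b :: u) := by
  cases u with
  | nil => simp [par]
  | cons c t =>
    rw [par]
    intro h
    rw [Sum.inl.injEq] at h
    apply_fun List.length at h
    simp at h
    omega

/-- neighbours of an `inr` vertex lie in a two-element set (uses `1 ≤ k`). -/
lemma inr_two_nbrs (hk : 1 ≤ k) (i : Fin (k+1)) :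
    ∃ u v : List Bool ⊕ Fin (k+1), ∀ p, (TExample k).Adj (Sum.inr i) p → p = u ∨ p = v := by
  rcases Nat.eq_zero_or_pos i.val with h0 | hpos
  · refine ⟨Sum.inl [], Sum.inr ⟨1, by omega⟩, ?_⟩
    intro p hp
    cases p with
    | inl s =>
      rw [adj_inr_inl] at hp
      exact Or.inl (by rw [hp.1])
    | inr j =>
      rw [adj_inr_inr] at hp
      refine Or.inr ?_
      rcases hp with h | h
      · congr 1; exact Fin.ext (by simp [h, h0])
      · omega
  · refine ⟨Sum.inr ⟨i.val - 1, by omega⟩, Sum.inr ⟨min (i.val + 1) k, by omega⟩, ?_⟩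
    intro p hp
    cases p with
    | inl s =>
      rw [adj_inr_inl] at hp
      omega
    | inr j =>
      rw [adj_inr_inr] at hp
      rcases hp with h | h
      · refine Or.inr ?_
        congr 1
        have : j.val ≤ k := by omega
        exact Fin.ext (by simp; omega)
      · exact Or.inl (by congr 1; exact Fin.ext (by simp; omega))

end Aux

namespace Aux

variable {k : ℕ}

lemma nbrs_distinct (s : List Bool) :
    (Sum.inl (true :: s) : List Bool ⊕ Fin (k+1)) ≠ Sum.inl (false :: s) ∧
    (Sum.inl (true :: s) : List Bool ⊕ Fin (k+1)) ≠ par k s ∧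
    (Sum.inl (false :: s) : List Bool ⊕ Fin (k+1)) ≠ par k s := by
  refine ⟨by simp, fun h => par_ne_cons h.symm, fun h => par_ne_cons h.symm⟩

lemma pigeon2 {α : Type*} {y1 y2 y3 u v : α}
    (h12 : y1 ≠ y2) (h13 : y1 ≠ y3) (h23 : y2 ≠ y3)
    (m1 : y1 = u ∨ y1 = v) (m2 : y2 = u ∨ y2 = v) (m3 : y3 = u ∨ y3 = v) : False := by
  rcases m1 with rfl | rfl <;> rcases m2 with h | h <;> rcases m3 with h' | h' <;> simp_all

lemma pigeon3 {α : Type*} {y1 y2 y3 m1 m2 m3 p : α}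
    (h12 : y1 ≠ y2) (h13 : y1 ≠ y3) (h23 : y2 ≠ y3)
    (hy1 : y1 = m1 ∨ y1 = m2 ∨ y1 = m3)
    (hy2 : y2 = m1 ∨ y2 = m2 ∨ y2 = m3)
    (hy3 : y3 = m1 ∨ y3 = m2 ∨ y3 = m3)
    (hp : p = m1 ∨ p = m2 ∨ p = m3) :
    p = y1 ∨ p = y2 ∨ p = y3 := by
  by_contra hc
  push_neg at hc
  obtain ⟨c1, c2, c3⟩ := hc
  rcases hy1 with h1 | h1 | h1 <;> rcases hy2 with h2 | h2 | h2 <;>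
    rcases hy3 with h3 | h3 | h3 <;> rcases hp with h4 | h4 | h4 <;> subst h4 <;> simp_all

variable {g : (List Bool ⊕ Fin (k+1)) → (List Bool ⊕ Fin (k+1))}

/-- the image of an `inl` vertex is `inl`. -/
lemma g_inl_inl (hk : 1 ≤ k) (hg : IsEmb (TExample k) g) (s : List Bool) :
    ∃ u, g (Sum.inl s) = Sum.inl u := by
  obtain ⟨hinj, hadj⟩ := hg
  cases hgs : g (Sum.inl s) with
  | inl u => exact ⟨u, rfl⟩
  | inr i =>
    exfalso
    obtain ⟨u, v, huv⟩ := inr_two_nbrs hk i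
    obtain ⟨d12, d13, d23⟩ := nbrs_distinct (k := k) s
    have a1 := hadj _ _ ((nbr_char (k := k)).2 (Or.inl rfl) : (TExample k).Adj (Sum.inl s) (Sum.inl (true :: s)))
    have a2 := hadj _ _ ((nbr_char (k := k)).2 (Or.inr (Or.inl rfl)) : (TExample k).Adj (Sum.inl s) (Sum.inl (false :: s)))
    have a3 := hadj _ _ (adj_par s)
    rw [hgs] at a1 a2 a3
    exact pigeon2 (fun h => d12 (hinj h)) (fun h => d13 (hinj h)) (fun h => d23 (hinj h))
      (huv _ a1) (huv _ a2) (huv _ a3)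

/-- neighbourhood surjectivity at an `inl` vertex with `inl` image. -/
lemma g_nbr_surj (hg : IsEmb (TExample k) g) {s u : List Bool}
    (hgs : g (Sum.inl s) = Sum.inl u) {p : List Bool ⊕ Fin (k+1)}
    (hp : (TExample k).Adj (Sum.inl u) p) :
    ∃ q, (TExample k).Adj (Sum.inl s) q ∧ g q = p := by
  obtain ⟨hinj, hadj⟩ := hg
  obtain ⟨d12, d13, d23⟩ := nbrs_distinct (k := k) s
  obtain ⟨e12, e13, e23⟩ := nbrs_distinct (k := k) u
  have a1 := hadj _ _ ((nbr_char (k := k)).2 (Or.inl rfl) : (TExample k).Adj (Sum.inl s) (Sum.inl (true :: s)))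
  have a2 := hadj _ _ ((nbr_char (k := k)).2 (Or.inr (Or.inl rfl)) : (TExample k).Adj (Sum.inl s) (Sum.inl (false :: s)))
  have a3 := hadj _ _ (adj_par s)
  rw [hgs] at a1 a2 a3
  have hy1 := (nbr_char (k := k)).1 a1
  have hy2 := (nbr_char (k := k)).1 a2
  have hy3 := (nbr_char (k := k)).1 a3
  have hple := (nbr_char (k := k)).1 hp
  have := pigeon3 (fun h => d12 (hinj h)) (fun h => d13 (hinj h)) (fun h => d23 (hinj h))
    hy1 hy2 hy3 hple
  rcases this with h | h | h
  · exact ⟨_, (nbr_char (k := k)).2 (Or.inl rfl), h.symm⟩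
  · exact ⟨_, (nbr_char (k := k)).2 (Or.inr (Or.inl rfl)), h.symm⟩
  · exact ⟨_, adj_par s, h.symm⟩

end Aux

namespace Aux

variable {k : ℕ} {g : (List Bool ⊕ Fin (k+1)) → (List Bool ⊕ Fin (k+1))}

/-- Main combinatorial lemma: a fixed-point-free self-embedding strictly increases
the depth of every binary-tree vertex. -/
lemma depth_lt (hk : 1 ≤ k) (hg : IsEmb (TExample k) g) (hnf : ¬ FixesVertex g)
    (s : List Bool) : ∃ u, g (Sum.inl s) = Sum.inl u ∧ s.length < u.length := by
  obtain ⟨u, hu⟩ := g_inl_inl hk hg s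
  refine ⟨u, hu, ?_⟩
  by_contra hlen
  push_neg at hlen
  -- chain construction
  have chain : ∀ j, j ≤ u.length →
      ∃ w : List Bool, g (Sum.inl w) = Sum.inl (u.drop j) ∧ s.length ≤ w.length + j := by
    intro j
    induction j with
    | zero => intro _; exact ⟨s, by simpa using hu, by omega⟩
    | succ j ih =>
      intro hj1
      obtain ⟨w, hw, hwlen⟩ := ih (by omega)
      have hne : u.drop j ≠ [] := by
        intro h
        have := congrArg List.length h
        simp at this
        omega
      obtain ⟨b, rest, hbr⟩ := List.exists_cons_of_ne_nil hne
      have hrest : u.drop (j+1) = rest := by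
        have h1 : List.drop 1 (u.drop j) = u.drop (j+1) := by
          rw [List.drop_drop]
        rw [hbr] at h1
        simpa using h1.symm
      have hadjp : (TExample k).Adj (Sum.inl (u.drop j)) (Sum.inl (u.drop (j+1))) := by
        rw [adj_inl_inl, hbr, hrest]
        exact Or.inr ⟨b, rfl⟩
      obtain ⟨q, hq, hgq⟩ := g_nbr_surj hg hw hadjp
      cases q with
      | inl w' =>
        refine ⟨w', hgq, ?_⟩
        rw [adj_inl_inl] at hq
        rcases hq with ⟨c, rfl⟩ | ⟨c, hc⟩
        · simp; omega
        · have := congrArg List.length hc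
          simp at this
          omega
      | inr i =>
        rw [adj_inl_inr] at hq
        obtain ⟨rfl, -⟩ := hq
        simp at hwlen
        omega
  obtain ⟨w0, hw0, -⟩ := chain u.length le_rfl
  rw [List.drop_length] at hw0
  have hadj0 : (TExample k).Adj (Sum.inl ([] : List Bool)) (Sum.inr (0 : Fin (k+1))) := by
    rw [adj_inl_inr]; simp
  obtain ⟨q, hq, hgq⟩ := g_nbr_surj hg hw0 hadj0
  cases q with
  | inl w' =>
    obtain ⟨u', hu'⟩ := g_inl_inl hk hg w'
    rw [hu'] at hgq
    exact absurd hgq (by simp)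
  | inr i =>
    rw [adj_inl_inr] at hq
    obtain ⟨-, hi⟩ := hq
    have : i = (0 : Fin (k+1)) := Fin.ext (by simpa using hi)
    subst this
    exact hnf ⟨Sum.inr 0, hgq⟩

end Aux

namespace Aux

variable {k : ℕ}

/-- distance to the leaf end of the attached path -/
def D (k : ℕ) : (List Bool ⊕ Fin (k+1)) → ℕ
  | Sum.inl s => s.length + k + 1
  | Sum.inr i => k - i

lemma edge_D {x y : List Bool ⊕ Fin (k+1)} (h : (TExample k).Adj x y) :
    D k y = D k x + 1 ∨ D k x = D k y + 1 := by
  cases x with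
  | inl s =>
    cases y with
    | inl t =>
      rw [adj_inl_inl] at h
      rcases h with ⟨b, rfl⟩ | ⟨b, rfl⟩
      · left; simp [D]; omega
      · right; simp [D]; omega
    | inr i =>
      rw [adj_inl_inr] at h
      obtain ⟨rfl, hi⟩ := h
      right; simp [D, hi]
  | inr i =>
    cases y with
    | inl t =>
      rw [adj_inr_inl] at h
      obtain ⟨rfl, hi⟩ := h
      left; simp [D, hi]
    | inr j =>
      rw [adj_inr_inr] at h
      have hi := i.isLt
      have hj := j.isLt
      rcases h with h | h
      · right; simp [D]; omega
      · left; simp [D]; omega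

/-- uniqueness of the downward (towards the leaf) neighbour -/
lemma parent_unique {v y y' : List Bool ⊕ Fin (k+1)}
    (h : (TExample k).Adj v y) (h' : (TExample k).Adj v y')
    (hd : D k y + 1 = D k v) (hd' : D k y' + 1 = D k v) : y = y' := by
  cases v with
  | inl s =>
    have hy : ∀ z, (TExample k).Adj (Sum.inl s) z → D k z + 1 = D k (Sum.inl s) → z = par k s := by
      intro z hz hzd
      rcases (nbr_char (k := k)).1 hz with rfl | rfl | rfl
      · exfalso; simp [D] at hzd; omega
      · exfalso; simp [D] at hzd; omega
      · rfl
    rw [hy y h hd, hy y' h' hd']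
  | inr i =>
    have hy : ∀ z, (TExample k).Adj (Sum.inr i) z → D k z + 1 = D k (Sum.inr i) →
        ∃ j : Fin (k+1), z = Sum.inr j ∧ j.val = i.val + 1 := by
      intro z hz hzd
      have hi := i.isLt
      cases z with
      | inl t =>
        rw [adj_inr_inl] at hz
        obtain ⟨rfl, hz0⟩ := hz
        exfalso
        simp [D, hz0] at hzd
        omega
      | inr j =>
        rw [adj_inr_inr] at hz
        have hj := j.isLt
        simp [D] at hzd
        rcases hz with h1 | h1
        · exact ⟨j, rfl, h1⟩
        · exfalso; omega
    obtain ⟨j1, rfl, hj1⟩ := hy y h hd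
    obtain ⟨j2, rfl, hj2⟩ := hy y' h' hd'
    congr 1
    exact Fin.ext (by omega)

end Aux

namespace Aux

variable {k : ℕ}

/-- every ray eventually descends along a fixed branch of the binary tree -/
lemma ray_stab (R : GRay (TExample k)) :
    ∃ (N : ℕ) (c : ℕ → List Bool), (∀ j, R.f (N + j) = Sum.inl (c j)) ∧
      (∀ j, ∃ b, c (j + 1) = b :: c j) := by
  -- step dichotomy
  have dich : ∀ n, D k (R.f (n+1)) = D k (R.f n) + 1 ∨ D k (R.f n) = D k (R.f (n+1)) + 1 :=
    fun n => edge_D (R.adj n)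
  -- there is an up-step
  have hup : ∃ n, D k (R.f (n+1)) = D k (R.f n) + 1 := by
    by_contra hc
    push_neg at hc
    have hdec : ∀ n, D k (R.f n) + n = D k (R.f 0) := by
      intro n
      induction n with
      | zero => rfl
      | succ n ih =>
        rcases dich n with h | h
        · exact absurd h (hc n)
        · omega
    have := hdec (D k (R.f 0) + 1)
    omega
  obtain ⟨n0, hn0⟩ := hup
  -- all later steps are up-steps
  have hallup : ∀ m, n0 ≤ m → D k (R.f (m+1)) = D k (R.f m) + 1 := by
    intro m hm
    induction m, hm using Nat.le_induction with
    | base => exact hn0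
    | succ m hm ih =>
      rcases dich (m+1) with h | h
      · exact h
      · exfalso
        have he : R.f (m + 1 + 1) = R.f m :=
          parent_unique (R.adj (m+1)) ((R.adj m).symm) (by omega) (by omega)
        have := R.inj he
        omega
  -- D grows linearly after n0
  have hgrow : ∀ j, D k (R.f (n0 + j)) = D k (R.f n0) + j := by
    intro j
    induction j with
    | zero => rfl
    | succ j ih =>
      have := hallup (n0 + j) (by omega)
      have heq : n0 + (j + 1) = (n0 + j) + 1 := by omega
      rw [heq, this, ih]
      omega
  set N := n0 + (k + 1) with hN
  have hinl : ∀ j, ∃ s : List Bool, R.f (N + j) = Sum.inl s := by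
    intro j
    have hD : k + 1 ≤ D k (R.f (N + j)) := by
      have := hgrow (k + 1 + j)
      have heq : n0 + (k + 1 + j) = N + j := by omega
      rw [heq] at this
      omega
    cases hRf : R.f (N + j) with
    | inl s => exact ⟨s, rfl⟩
    | inr i =>
      exfalso
      rw [hRf] at hD
      have := i.isLt
      simp [D] at hD
      omega
  refine ⟨N, fun j => Classical.choose (hinl j), fun j => Classical.choose_spec (hinl j), ?_⟩
  intro j
  show ∃ b, Classical.choose (hinl (j+1)) = b :: Classical.choose (hinl j)
  have h1 : R.f (N + j) = Sum.inl (Classical.choose (hinl j)) := Classical.choose_spec (hinl j)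
  have h2 : R.f (N + j + 1) = Sum.inl (Classical.choose (hinl (j+1))) :=
    Classical.choose_spec (hinl (j+1))
  have hadj : (TExample k).Adj (R.f (N + j)) (R.f (N + j + 1)) := R.adj (N + j)
  have hup2 : D k (R.f (N + j + 1)) = D k (R.f (N + j)) + 1 := hallup (N + j) (by omega)
  rw [h1, h2] at hadj hup2
  rw [adj_inl_inl] at hadj
  rcases hadj with ⟨b, hb⟩ | ⟨b, hb⟩
  · exact ⟨b, hb⟩
  · exfalso
    rw [hb] at hup2
    simp [D] at hup2
    omega

lemma chain_suffix {c : ℕ → List Bool} (hc : ∀ j, ∃ b, c (j + 1) = b :: c j) :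
    ∀ j j', j ≤ j' → c j <:+ c j' := by
  intro j j' hjj
  induction j', hjj using Nat.le_induction with
  | base => exact List.suffix_rfl
  | succ j' hj ih =>
    obtain ⟨b, hb⟩ := hc j'
    rw [hb]
    exact ih.trans (List.suffix_cons b (c j'))

lemma chain_len {c : ℕ → List Bool} (hc : ∀ j, ∃ b, c (j + 1) = b :: c j) :
    ∀ j, (c j).length = (c 0).length + j := by
  intro j
  induction j with
  | zero => rfl
  | succ j ih =>
    obtain ⟨b, hb⟩ := hc j
    rw [hb]
    simp [ih]
    omega

end Aux

namespace Aux

variable {k : ℕ}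

/-- walk along a ray segment -/
lemma ray_segment (R : GRay (TExample k)) (m n : ℕ) (hmn : m ≤ n) :
    ∃ w : (TExample k).Walk (R.f m) (R.f n),
      ∀ x ∈ w.support, ∃ i, m ≤ i ∧ i ≤ n ∧ x = R.f i := by
  induction n, hmn using Nat.le_induction with
  | base =>
    exact ⟨SimpleGraph.Walk.nil, by intro x hx; simp at hx; exact ⟨m, le_rfl, le_rfl, hx⟩⟩
  | succ n hn ih =>
    obtain ⟨w, hw⟩ := ih
    refine ⟨w.concat (R.adj n), ?_⟩
    intro x hx
    rw [SimpleGraph.Walk.support_concat, List.mem_append] at hx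
    rcases hx with h | h
    · obtain ⟨i, h1, h2, h3⟩ := hw x h
      exact ⟨i, h1, by omega, h3⟩
    · simp at h
      exact ⟨n + 1, by omega, le_rfl, h⟩

/-- walk from a vertex down to a suffix -/
lemma suffix_walk {t s : List Bool} (h : t <:+ s) :
    ∃ w : (TExample k).Walk (Sum.inl s) (Sum.inl t),
      ∀ x ∈ w.support, ∃ r, x = Sum.inl r ∧ t <:+ r := by
  obtain ⟨c, rfl⟩ := h
  induction c with
  | nil =>
    exact ⟨SimpleGraph.Walk.nil, by intro x hx; simp at hx; exact ⟨t, hx, List.suffix_rfl⟩⟩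
  | cons b c ih =>
    obtain ⟨w, hw⟩ := ih
    have hadj : (TExample k).Adj (Sum.inl ((b :: c) ++ t)) (Sum.inl (c ++ t)) := by
      rw [adj_inl_inl]
      exact Or.inr ⟨b, rfl⟩
    refine ⟨SimpleGraph.Walk.cons hadj w, ?_⟩
    intro x hx
    rw [SimpleGraph.Walk.support_cons] at hx
    rcases List.mem_cons.1 hx with h | h
    · exact ⟨(b :: c) ++ t, h, ⟨b :: c, rfl⟩⟩
    · exact hw x h

/-- separation: a walk avoiding `inl a` cannot go from the `b1`-subtree to the
`b2`-subtree below `a`. -/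
lemma separation (a : List Bool) (b1 b2 : Bool) (hb : b1 ≠ b2) :
    ∀ {x y : List Bool ⊕ Fin (k+1)} (w : (TExample k).Walk x y),
      Sum.inl a ∉ w.support →
      ∀ s, x = Sum.inl s → (b1 :: a) <:+ s →
      ∀ t, y = Sum.inl t → (b2 :: a) <:+ t → False := by
  intro x y w
  induction w with
  | nil =>
    intro ha s hs h1 t ht h2
    subst hs
    rw [Sum.inl.injEq] at ht
    subst ht
    rcases List.suffix_or_suffix_of_suffix h1 h2 with h | h
    · exact hb (by simpa using (List.IsSuffix.eq_of_length h (by simp)))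
    · exact hb (by simpa using (List.IsSuffix.eq_of_length h (by simp)).symm)
  | @cons u v yy hadj p ih =>
    intro ha s hs h1 t ht h2
    subst hs
    rw [SimpleGraph.Walk.support_cons, List.mem_cons] at ha
    push_neg at ha
    obtain ⟨ha1, ha2⟩ := ha
    cases v with
    | inr i =>
      rw [adj_inl_inr] at hadj
      obtain ⟨rfl, -⟩ := hadj
      have := h1.length_le
      simp at this
    | inl s' =>
      rw [adj_inl_inl] at hadj
      rcases hadj with ⟨b, rfl⟩ | ⟨b, hbs⟩
      · exact ih ha2 _ rfl (h1.trans (List.suffix_cons b s)) t ht h2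
      · subst hbs
        rcases List.suffix_cons_iff.1 h1 with h | h
        · rw [List.cons.injEq] at h
          obtain ⟨-, rfl⟩ := h
          exact ha2 p.start_mem_support
        · exact ih ha2 _ rfl h t ht h2

/-- two prefix-incomparable lists diverge -/
lemma prefix_div : ∀ (u w : List Bool), ¬ (u <+: w) → ¬ (w <+: u) →
    ∃ (a : List Bool) (b1 b2 : Bool), b1 ≠ b2 ∧ (a ++ [b1]) <+: u ∧ (a ++ [b2]) <+: w := by
  intro u
  induction u with
  | nil => intro w h1 _; exact absurd (List.nil_prefix) h1
  | cons x u' ih =>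
    intro w h1 h2
    cases w with
    | nil => exact absurd (List.nil_prefix) h2
    | cons y w' =>
      by_cases hxy : x = y
      · subst hxy
        have h1' : ¬ (u' <+: w') := fun h => h1 (List.cons_prefix_cons.2 ⟨rfl, h⟩)
        have h2' : ¬ (w' <+: u') := fun h => h2 (List.cons_prefix_cons.2 ⟨rfl, h⟩)
        obtain ⟨a, b1, b2, hb, hp1, hp2⟩ := ih w' h1' h2'
        exact ⟨x :: a, b1, b2, hb, List.cons_prefix_cons.2 ⟨rfl, hp1⟩,
          List.cons_prefix_cons.2 ⟨rfl, hp2⟩⟩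
      · exact ⟨[], x, y, hxy, List.cons_prefix_cons.2 ⟨rfl, List.nil_prefix⟩,
          List.cons_prefix_cons.2 ⟨rfl, List.nil_prefix⟩⟩

/-- two suffix-incomparable lists diverge -/
lemma suffix_div (u w : List Bool) (h1 : ¬ (u <:+ w)) (h2 : ¬ (w <:+ u)) :
    ∃ (a : List Bool) (b1 b2 : Bool), b1 ≠ b2 ∧ (b1 :: a) <:+ u ∧ (b2 :: a) <:+ w := by
  have h1' : ¬ (u.reverse <+: w.reverse) := fun h => h1 (List.reverse_prefix.1 h)
  have h2' : ¬ (w.reverse <+: u.reverse) := fun h => h2 (List.reverse_prefix.1 h)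
  obtain ⟨a, b1, b2, hb, hp1, hp2⟩ := prefix_div u.reverse w.reverse h1' h2'
  refine ⟨a.reverse, b1, b2, hb, ?_, ?_⟩
  · refine List.reverse_prefix.1 ?_
    simpa using hp1
  · refine List.reverse_prefix.1 ?_
    simpa using hp2

end Aux

namespace Aux

variable {k : ℕ}

/-- connectivity avoiding the vertex `inl a` -/
def Conn (k : ℕ) (a : List Bool) (x y : List Bool ⊕ Fin (k+1)) : Prop :=
  ∃ w : (TExample k).Walk x y, Sum.inl a ∉ w.support

lemma Conn.symm {a : List Bool} {x y : List Bool ⊕ Fin (k+1)} (h : Conn k a x y) :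
    Conn k a y x := by
  obtain ⟨w, hw⟩ := h
  refine ⟨w.reverse, ?_⟩
  rw [SimpleGraph.Walk.support_reverse, List.mem_reverse]
  exact hw

lemma Conn.trans {a : List Bool} {x y z : List Bool ⊕ Fin (k+1)}
    (h1 : Conn k a x y) (h2 : Conn k a y z) : Conn k a x z := by
  obtain ⟨w1, hw1⟩ := h1
  obtain ⟨w2, hw2⟩ := h2
  refine ⟨w1.append w2, ?_⟩
  rw [SimpleGraph.Walk.mem_support_append_iff]
  rintro (h | h)
  · exact hw1 h
  · exact hw2 h

lemma tail_avoid (R : GRay (TExample k)) (v : List Bool ⊕ Fin (k+1)) :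
    ∃ m, ∀ i, m ≤ i → R.f i ≠ v := by
  by_cases h : ∃ i, R.f i = v
  · obtain ⟨i0, hi0⟩ := h
    refine ⟨i0 + 1, fun i hi he => ?_⟩
    have := R.inj (he.trans hi0.symm)
    omega
  · push_neg at h
    exact ⟨0, fun i _ => h i⟩

/-- if the branches of the two rays are suffix-comparable, the rays are equivalent -/
lemma comparable_rayEquiv (R1 R2 : GRay (TExample k)) (N1 N2 : ℕ) (c1 c2 : ℕ → List Bool)
    (hc1 : ∀ j, R1.f (N1 + j) = Sum.inl (c1 j)) (hs1 : ∀ j, ∃ b, c1 (j+1) = b :: c1 j)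
    (hc2 : ∀ j, R2.f (N2 + j) = Sum.inl (c2 j)) (hs2 : ∀ j, ∃ b, c2 (j+1) = b :: c2 j)
    (hcomp : ∀ j, ∃ j', c1 j <:+ c2 j') :
    RayEquiv (TExample k) R1 R2 := by
  intro v
  obtain ⟨m0, hm0⟩ := tail_avoid R1 v
  obtain ⟨n0, hn0⟩ := tail_avoid R2 v
  obtain ⟨L, hLv⟩ : ∃ L : ℕ, ∀ a' : List Bool, v = Sum.inl a' → a'.length < L := by
    cases v with
    | inl a' =>
      refine ⟨a'.length + 1, fun b hb => ?_⟩
      rw [Sum.inl.injEq] at hb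
      subst hb
      omega
    | inr i => exact ⟨0, fun b hb => absurd hb (by simp)⟩
  obtain ⟨j', hj'⟩ := hcomp (m0 + L)
  have hsub : c1 (m0 + L) <:+ c2 (j' + n0) :=
    hj'.trans (chain_suffix hs2 j' (j' + n0) (by omega))
  obtain ⟨w, hw⟩ := suffix_walk (k := k) hsub
  refine ⟨N1 + (m0 + L), N2 + (j' + n0), fun i hi => hm0 i (by omega),
    fun i hi => hn0 i (by omega),
    (w.reverse).copy (hc1 (m0 + L)).symm (hc2 (j' + n0)).symm, ?_⟩
  rw [SimpleGraph.Walk.support_copy, SimpleGraph.Walk.support_reverse, List.mem_reverse]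
  intro hv
  obtain ⟨r, hr, hsuf⟩ := hw v hv
  have hlen : L ≤ r.length := by
    have h1 := hsuf.length_le
    have h2 := chain_len hs1 (m0 + L)
    omega
  have := hLv r hr
  omega

end Aux


theorem stmt14 (k : ℕ) (hk : 1 ≤ k)
    (g : (List Bool ⊕ Fin (k + 1)) → (List Bool ⊕ Fin (k + 1)))
    (hg : IsEmb (TExample k) g) : ¬ Hyperbolic (TExample k) g := by
  open Aux in
  rintro ⟨hne, R1, R2, hR12, hF1, hF2, -⟩
  have hnf : ¬ FixesVertex g := fun h => hne (Or.inl h)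
  obtain ⟨N1, c1, hc1, hs1⟩ := ray_stab R1
  obtain ⟨N2, c2, hc2, hs2⟩ := ray_stab R2
  by_cases hcomp : ∀ j, ∃ j', c1 j <:+ c2 j'
  · exact hR12 (comparable_rayEquiv R1 R2 N1 N2 c1 c2 hc1 hs1 hc2 hs2 hcomp)
  push_neg at hcomp
  obtain ⟨j0, hj0⟩ := hcomp
  -- find the divergence vertex
  set j1 := (c1 j0).length + 1 with hj1def
  have hnot2 : ¬ (c2 j1 <:+ c1 j0) := by
    intro h
    have h1 := h.length_le
    have h2 := chain_len hs2 j1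
    omega
  obtain ⟨a, b1, b2, hb, hsuf1, hsuf2⟩ := suffix_div (c1 j0) (c2 j1) (hj0 j1) hnot2
  -- fixed-end data, instantiated at the divergence vertex
  obtain ⟨S1, hS1, hEq1⟩ := hF1
  obtain ⟨S2, hS2, hEq2⟩ := hF2
  obtain ⟨m1, n1, hT1S, hT1R, w1, hw1⟩ := hEq1 (Sum.inl a)
  obtain ⟨m2, n2, hT2S, hT2R, w2, hw2⟩ := hEq2 (Sum.inl a)
  -- choose deep tail vertices
  set jx := j0 + m1 + n1 with hjx
  set jy := j1 + m2 + n2 with hjy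
  set n := N1 + jx with hn
  set n' := N2 + jy with hn'
  set sx := c1 jx with hsxdef
  set sy := c2 jy with hsydef
  have hsx : R1.f n = Sum.inl sx := hc1 jx
  have hsy : R2.f n' = Sum.inl sy := hc2 jy
  have hsufx : (b1 :: a) <:+ sx := hsuf1.trans (chain_suffix hs1 j0 jx (by omega))
  have hsufy : (b2 :: a) <:+ sy := hsuf2.trans (chain_suffix hs2 j1 jy (by omega))
  -- Conn a (g x) x
  have hgx : Conn k a (g (R1.f n)) (R1.f n) := by
    obtain ⟨wb, hwb⟩ := ray_segment S1 m1 n (by omega)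
    obtain ⟨wa, hwa⟩ := ray_segment R1 n1 n (by omega)
    have cS : Conn k a (S1.f n) (S1.f m1) := by
      refine ⟨wb.reverse, ?_⟩
      rw [SimpleGraph.Walk.support_reverse, List.mem_reverse]
      intro hmem
      obtain ⟨i, hi1, -, hi3⟩ := hwb _ hmem
      exact hT1S i hi1 hi3.symm
    have cW : Conn k a (S1.f m1) (R1.f n1) := by
      refine ⟨w1, hw1⟩
    have cR : Conn k a (R1.f n1) (R1.f n) := by
      refine ⟨wa, ?_⟩
      intro hmem
      obtain ⟨i, hi1, -, hi3⟩ := hwa _ hmem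
      exact hT1R i hi1 hi3.symm
    have := (cS.trans cW).trans cR
    rwa [hS1 n] at this
  -- Conn a (g y) y
  have hgy : Conn k a (g (R2.f n')) (R2.f n') := by
    obtain ⟨wb, hwb⟩ := ray_segment S2 m2 n' (by omega)
    obtain ⟨wa, hwa⟩ := ray_segment R2 n2 n' (by omega)
    have cS : Conn k a (S2.f n') (S2.f m2) := by
      refine ⟨wb.reverse, ?_⟩
      rw [SimpleGraph.Walk.support_reverse, List.mem_reverse]
      intro hmem
      obtain ⟨i, hi1, -, hi3⟩ := hwb _ hmem
      exact hT2S i hi1 hi3.symm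
    have cW : Conn k a (S2.f m2) (R2.f n2) := ⟨w2, hw2⟩
    have cR : Conn k a (R2.f n2) (R2.f n') := by
      refine ⟨wa, ?_⟩
      intro hmem
      obtain ⟨i, hi1, -, hi3⟩ := hwa _ hmem
      exact hT2R i hi1 hi3.symm
    have := (cS.trans cW).trans cR
    rwa [hS2 n'] at this
  -- the middle walk: from x to y through the divergence vertex, then mapped by g
  obtain ⟨wd, hwd⟩ := suffix_walk (k := k) hsufx
  obtain ⟨we, hwe⟩ := suffix_walk (k := k) hsufy
  have e1 : (TExample k).Adj (Sum.inl (b1 :: a)) (Sum.inl a) := by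
    rw [adj_inl_inl]; exact Or.inr ⟨b1, rfl⟩
  have e2 : (TExample k).Adj (Sum.inl a) (Sum.inl (b2 :: a)) := by
    rw [adj_inl_inl]; exact Or.inl ⟨b2, rfl⟩
  set P := wd.append (SimpleGraph.Walk.cons e1 (SimpleGraph.Walk.cons e2 we.reverse)) with hP
  have hPsupp : ∀ z ∈ P.support, ∃ r : List Bool, z = Sum.inl r ∧ a.length ≤ r.length := by
    intro z hz
    rw [hP, SimpleGraph.Walk.mem_support_append_iff] at hz
    rcases hz with hz | hz
    · obtain ⟨r, hr1, hr2⟩ := hwd z hz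
      have := hr2.length_le
      exact ⟨r, hr1, by simp at this; omega⟩
    · rw [SimpleGraph.Walk.support_cons, List.mem_cons] at hz
      rcases hz with rfl | hz
      · exact ⟨b1 :: a, rfl, by simp⟩
      rw [SimpleGraph.Walk.support_cons, List.mem_cons] at hz
      rcases hz with rfl | hz
      · exact ⟨a, rfl, le_rfl⟩
      rw [SimpleGraph.Walk.support_reverse, List.mem_reverse] at hz
      obtain ⟨r, hr1, hr2⟩ := hwe z hz
      have := hr2.length_le
      exact ⟨r, hr1, by simp at this; omega⟩
  -- map by g
  have hgP : Conn k a (g (Sum.inl sx)) (g (Sum.inl sy)) := by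
    refine ⟨P.map ⟨g, fun h => hg.2 _ _ h⟩, ?_⟩
    rw [SimpleGraph.Walk.support_map]
    intro hmem
    rw [List.mem_map] at hmem
    obtain ⟨z, hz, hgz⟩ := hmem
    obtain ⟨r, rfl, hrlen⟩ := hPsupp z hz
    obtain ⟨u', hu', hlen'⟩ := depth_lt hk hg hnf r
    have hga : g (Sum.inl r) = Sum.inl a := hgz
    rw [hu', Sum.inl.injEq] at hga
    subst hga
    omega
  have hgP' : Conn k a (g (R1.f n)) (g (R2.f n')) := by
    rw [hsx, hsy]
    exact hgP
  have hConn : Conn k a (R1.f n) (R2.f n') := (hgx.symm.trans hgP').trans hgy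
  obtain ⟨W, hW⟩ := hConn
  exact separation a b1 b2 hb W hW sx hsx hsufx sy hsy hsufy
end

section
/- Let T be a tree and M a submonoid of Emb(T). If the limit set L(M) has at least two elements and some end of T is fixed by every element of M, then M contains a hyperbolic self-embedding. -/
open SimpleGraph

variable {V : Type*}

section TreeToolkit
variable {G : SimpleGraph V}

noncomputable def geo (hT : G.IsTree) (u v : V) : G.Walk u v :=
  (hT.existsUnique_path u v).choose

lemma geo_isPath (hT : G.IsTree) (u v : V) : (geo hT u v).IsPath :=
  (hT.existsUnique_path u v).choose_spec.1

lemma geo_unique (hT : G.IsTree) {u v : V} (p : G.Walk u v) (hp : p.IsPath) :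
    p = geo hT u v :=
  (hT.existsUnique_path u v).choose_spec.2 p hp

noncomputable def tdist (hT : G.IsTree) (u v : V) : ℕ := (geo hT u v).length

lemma tdist_le_length (hT : G.IsTree) {u v : V} (p : G.Walk u v) :
    tdist hT u v ≤ p.length := by
  classical
  have h := geo_unique hT p.bypass p.bypass_isPath
  have := p.length_bypass_le
  rw [h] at this; exact this

lemma geo_support_subset (hT : G.IsTree) {u v : V} (p : G.Walk u v) :
    (geo hT u v).support ⊆ p.support := by
  classical
  have h := geo_unique hT p.bypass p.bypass_isPath
  rw [← h]; exact p.support_bypass_subset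

lemma tdist_self (hT : G.IsTree) (u : V) : tdist hT u u = 0 := by
  have : (Walk.nil : G.Walk u u) = geo hT u u := geo_unique hT _ (Walk.IsPath.nil)
  simp [tdist, ← this]

lemma tdist_eq_zero_iff (hT : G.IsTree) {u v : V} : tdist hT u v = 0 ↔ u = v := by
  constructor
  · intro h; exact (geo hT u v).eq_of_length_eq_zero h
  · rintro rfl; exact tdist_self hT u

lemma tdist_comm (hT : G.IsTree) (u v : V) : tdist hT u v = tdist hT v u := by
  have : (geo hT u v).reverse = geo hT v u :=
    geo_unique hT _ ((geo_isPath hT u v).reverse)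
  rw [tdist, tdist, ← this, Walk.length_reverse]

lemma tdist_adj (hT : G.IsTree) {u v : V} (h : G.Adj u v) : tdist hT u v = 1 := by
  have hp : (Walk.cons h Walk.nil : G.Walk u v).IsPath := by
    simp [Walk.cons_isPath_iff, h.ne]
  have := geo_unique hT _ hp
  rw [tdist, ← this]; rfl

lemma tdist_triangle (hT : G.IsTree) (u x v : V) :
    tdist hT u v ≤ tdist hT u x + tdist hT x v := by
  classical
  have := tdist_le_length hT ((geo hT u x).append (geo hT x v))
  rwa [Walk.length_append] at this

lemma mem_geo_iff (hT : G.IsTree) {u v : V} (x : V) :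
    x ∈ (geo hT u v).support ↔ tdist hT u v = tdist hT u x + tdist hT x v := by
  classical
  constructor
  · intro hx
    have h1 : ((geo hT u v).takeUntil x hx) = geo hT u x :=
      geo_unique hT _ ((geo_isPath hT u v).takeUntil hx)
    have h2 : ((geo hT u v).dropUntil x hx) = geo hT x v :=
      geo_unique hT _ ((geo_isPath hT u v).dropUntil hx)
    have h3 := (geo hT u v).take_spec hx
    have h4 := congrArg Walk.length h3
    rw [Walk.length_append, h1, h2] at h4
    rw [tdist, ← h4]; rfl
  · intro hd
    set W := (geo hT u x).append (geo hT x v) with hW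
    have hlen : W.length = tdist hT u v := by
      rw [hW, Walk.length_append, hd]; rfl
    have hbp : W.bypass = geo hT u v := geo_unique hT _ W.bypass_isPath
    have : W.length ≤ W.bypass.length := by rw [hbp, hlen]; exact le_refl _
    have hWeq := W.bypass_eq_self_of_length_le this
    have hWpath : W.IsPath := by rw [← hWeq]; exact W.bypass_isPath
    have : W = geo hT u v := geo_unique hT W hWpath
    rw [← this]
    rw [hW, Walk.mem_support_append_iff]
    left; exact Walk.end_mem_support _

lemma mem_walk_of_mem_geo (hT : G.IsTree) {u v x : V} (hx : x ∈ (geo hT u v).support)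
    (p : G.Walk u v) : x ∈ p.support := geo_support_subset hT p hx

lemma mem_geo_split (hT : G.IsTree) {u v x y : V} (hx : x ∈ (geo hT u v).support)
    (hy : y ∈ (geo hT u v).support) :
    y ∈ (geo hT u x).support ∨ y ∈ (geo hT x v).support := by
  classical
  have h1 : ((geo hT u v).takeUntil x hx) = geo hT u x :=
    geo_unique hT _ ((geo_isPath hT u v).takeUntil hx)
  have h2 : ((geo hT u v).dropUntil x hx) = geo hT x v :=
    geo_unique hT _ ((geo_isPath hT u v).dropUntil hx)
  have h3 := (geo hT u v).take_spec hx
  rw [← h3, Walk.mem_support_append_iff, h1, h2] at hy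
  exact hy

namespace GRay

def walkLen (R : GRay G) (i : ℕ) : ∀ k : ℕ, G.Walk (R.f i) (R.f (i + k))
  | 0 => Walk.nil
  | (k+1) => (walkLen R i k).concat (R.adj (i+k))

lemma walkLen_support (R : GRay G) (i k : ℕ) :
    (R.walkLen i k).support = (List.range (k+1)).map (fun t => R.f (i + t)) := by
  induction k with
  | zero => simp [walkLen, List.range_succ]
  | succ k ih =>
    rw [walkLen, Walk.support_concat, ih]
    rw [List.range_succ (n := k+1), List.map_append]
    rw [List.range_succ (n := k), List.map_append]
    simp

lemma walkLen_length (R : GRay G) (i k : ℕ) : (R.walkLen i k).length = k := by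
  induction k with
  | zero => rfl
  | succ k ih => rw [walkLen, Walk.length_concat, ih]

lemma mem_walkLen_iff (R : GRay G) {i k : ℕ} (x : V) :
    x ∈ (R.walkLen i k).support ↔ ∃ t, t ≤ k ∧ R.f (i + t) = x := by
  rw [walkLen_support]
  simp only [List.mem_map, List.mem_range]
  constructor
  · rintro ⟨t, ht, rfl⟩; exact ⟨t, by omega, rfl⟩
  · rintro ⟨t, ht, rfl⟩; exact ⟨t, by omega, rfl⟩

lemma walkLen_isPath (R : GRay G) (i k : ℕ) : (R.walkLen i k).IsPath := by
  rw [Walk.isPath_def, walkLen_support]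
  refine List.Nodup.map_on ?_ List.nodup_range
  intro a ha b hb hab
  have := R.inj hab; omega

lemma geo_walkLen (hT : G.IsTree) (R : GRay G) (i k : ℕ) :
    geo hT (R.f i) (R.f (i+k)) = R.walkLen i k :=
  (geo_unique hT _ (R.walkLen_isPath i k)).symm

lemma tdist_ray (hT : G.IsTree) (R : GRay G) (i k : ℕ) :
    tdist hT (R.f i) (R.f (i+k)) = k := by
  rw [tdist, geo_walkLen hT R i k, walkLen_length]

lemma tdist_ray' (hT : G.IsTree) (R : GRay G) {i j : ℕ} (h : i ≤ j) :
    tdist hT (R.f i) (R.f j) = j - i := by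
  have := tdist_ray hT R i (j - i)
  rwa [Nat.add_sub_cancel' h] at this

lemma mem_geo_ray (hT : G.IsTree) (R : GRay G) {i t j : ℕ} (h1 : i ≤ t) (h2 : t ≤ j) :
    R.f t ∈ (geo hT (R.f i) (R.f j)).support := by
  rw [mem_geo_iff]
  rw [tdist_ray' hT R (le_trans h1 h2), tdist_ray' hT R h1, tdist_ray' hT R h2]
  omega

/-- tail of a ray avoids any given vertex -/
lemma tail_avoid (R : GRay G) (x : V) : ∃ N, ∀ i, N ≤ i → R.f i ≠ x := by
  by_cases h : ∃ i, R.f i = x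
  · obtain ⟨i0, hi0⟩ := h
    exact ⟨i0 + 1, fun i hi hx => by
      have : i = i0 := R.inj (hx.trans hi0.symm); omega⟩
  · exact ⟨0, fun i _ hx => h ⟨i, hx⟩⟩

end GRay

/-- step lemma: distances to the ends of an edge differ by exactly one -/
lemma tdist_step (hT : G.IsTree) {v w : V} (h : G.Adj v w) (z : V) :
    tdist hT z w = tdist hT z v + 1 ∨ tdist hT z v = tdist hT z w + 1 := by
  classical
  by_cases hw : w ∈ (geo hT z v).support
  · right
    rw [mem_geo_iff hT w] at hw
    rw [hw, tdist_adj hT h.symm]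
  · left
    have hp : (Walk.cons h.symm (geo hT z v).reverse : G.Walk w z).IsPath := by
      rw [Walk.cons_isPath_iff]
      exact ⟨(geo_isPath hT z v).reverse, by
        rw [Walk.support_reverse, List.mem_reverse]; exact hw⟩
    have := geo_unique hT _ hp.reverse
    have hlen := congrArg Walk.length this
    rw [Walk.length_reverse] at hlen
    simp only [Walk.length_cons, Walk.length_reverse] at hlen
    rw [tdist, ← hlen, tdist]

lemma tdist_le_succ (hT : G.IsTree) {v w : V} (h : G.Adj v w) (z : V) :
    tdist hT z w ≤ tdist hT z v + 1 := by
  rcases tdist_step hT h z with h1 | h1 <;> omega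

lemma mem_geo_comm (hT : G.IsTree) {u v x : V} :
    x ∈ (geo hT u v).support ↔ x ∈ (geo hT v u).support := by
  rw [mem_geo_iff, mem_geo_iff, tdist_comm hT u v, tdist_comm hT u x, tdist_comm hT x v]
  omega

lemma mem_geo_trans (hT : G.IsTree) {u w x y : V}
    (hx : x ∈ (geo hT u w).support) (hy : y ∈ (geo hT x w).support) :
    y ∈ (geo hT u w).support := by
  rw [mem_geo_iff] at hx hy ⊢
  have t1 := tdist_triangle hT u x y
  have t2 := tdist_triangle hT u y w
  omega

lemma mem_geo_mid (hT : G.IsTree) {u w x y : V}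
    (hx : x ∈ (geo hT u w).support) (hy : y ∈ (geo hT x w).support) :
    y ∈ (geo hT u w).support ∧ x ∈ (geo hT u y).support := by
  refine ⟨mem_geo_trans hT hx hy, ?_⟩
  rw [mem_geo_iff] at hx hy ⊢
  have t1 := tdist_triangle hT u x y
  have t2 := tdist_triangle hT u y w
  have t3 := tdist_triangle hT x y w
  omega

/-- once the distance to a ray increases, it keeps increasing -/
lemma ray_up_propagates (hT : G.IsTree) (S : GRay G) (z : V) (n : ℕ)
    (hup : tdist hT z (S.f (n+1)) = tdist hT z (S.f n) + 1) :
    tdist hT z (S.f (n+1+1)) = tdist hT z (S.f (n+1)) + 1 := by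
  rcases tdist_step hT (S.adj (n+1)) z with h | h
  · exact h
  · exfalso
    have mem1 : S.f n ∈ (geo hT z (S.f (n+1))).support := by
      rw [mem_geo_iff, tdist_adj hT (S.adj n), hup]
    have mem2 : S.f (n+1+1) ∈ (geo hT z (S.f (n+1))).support := by
      rw [mem_geo_iff, tdist_adj hT (S.adj (n+1)).symm]
      exact h
    rcases mem_geo_split hT mem1 mem2 with hc | hc
    · rw [mem_geo_iff] at hc
      have h0 : tdist hT (S.f (n+1+1)) (S.f n) = 0 := by omega
      have h1 := (tdist_eq_zero_iff hT).1 h0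
      have := S.inj h1
      omega
    · rw [mem_geo_iff] at hc
      have e1 : tdist hT (S.f n) (S.f (n+1)) = 1 := tdist_adj hT (S.adj n)
      have e2 : tdist hT (S.f n) (S.f (n+1+1)) = n+1+1-n := GRay.tdist_ray' hT S (by omega)
      have e3 : tdist hT (S.f (n+1+1)) (S.f (n+1)) = 1 := by
        rw [tdist_comm]
        have := GRay.tdist_ray' hT S (show n+1 ≤ n+1+1 by omega)
        omega
      omega

lemma ray_eventually_up (hT : G.IsTree) (S : GRay G) (z : V) :
    ∃ N, ∀ n, N ≤ n → tdist hT z (S.f (n+1)) = tdist hT z (S.f n) + 1 := by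
  by_cases h : ∃ n, tdist hT z (S.f (n+1)) = tdist hT z (S.f n) + 1
  · obtain ⟨n0, hn0⟩ := h
    refine ⟨n0, fun n hn => ?_⟩
    obtain ⟨k, rfl⟩ : ∃ k, n = n0 + k := ⟨n - n0, by omega⟩
    clear hn
    induction k with
    | zero => exact hn0
    | succ k ih => exact ray_up_propagates hT S z (n0+k) ih
  · exfalso
    push_neg at h
    have hdown : ∀ n, tdist hT z (S.f n) = tdist hT z (S.f (n+1)) + 1 := by
      intro n
      rcases tdist_step hT (S.adj n) z with h1 | h1
      · exact absurd h1 (h n)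
      · exact h1
    have hlin : ∀ t, tdist hT z (S.f t) + t ≤ tdist hT z (S.f 0) := by
      intro t
      induction t with
      | zero => omega
      | succ k ih => have := hdown k; omega
    have := hlin (tdist hT z (S.f 0) + 1)
    omega

noncomputable def rayStab (hT : G.IsTree) (S : GRay G) (z : V) : ℕ :=
  (ray_eventually_up hT S z).choose

lemma rayStab_spec (hT : G.IsTree) (S : GRay G) (z : V) :
    ∀ n, rayStab hT S z ≤ n → tdist hT z (S.f (n+1)) = tdist hT z (S.f n) + 1 :=
  (ray_eventually_up hT S z).choose_spec

lemma rayStab_dist (hT : G.IsTree) (S : GRay G) (z : V) {n : ℕ}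
    (hn : rayStab hT S z ≤ n) :
    tdist hT z (S.f n) = tdist hT z (S.f (rayStab hT S z)) + (n - rayStab hT S z) := by
  set N := rayStab hT S z with hN
  obtain ⟨k, rfl⟩ : ∃ k, n = N + k := ⟨n - N, by omega⟩
  induction k with
  | zero => simp
  | succ k ih =>
    have h1 := rayStab_spec hT S z (N + k) (by omega)
    have h2 := ih (by omega)
    have : N + (k + 1) = (N + k) + 1 := by omega
    rw [this, h1, h2]
    omega

/-- the Busemann function w.r.t. the ray S -/
noncomputable def bval (hT : G.IsTree) (S : GRay G) (z : V) : ℤ :=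
  (rayStab hT S z : ℤ) - tdist hT z (S.f (rayStab hT S z))

lemma bval_spec (hT : G.IsTree) (S : GRay G) (z : V) {k : ℕ}
    (hk : rayStab hT S z ≤ k) :
    (k : ℤ) - tdist hT z (S.f k) = bval hT S z := by
  rw [rayStab_dist hT S z hk, bval]
  push_cast
  omega

lemma bval_ub (hT : G.IsTree) (S : GRay G) (z : V) (k : ℕ) :
    (k : ℤ) - tdist hT z (S.f k) ≤ bval hT S z := by
  set N := rayStab hT S z with hN
  rcases Nat.lt_or_ge k N with h | h
  · have htri := tdist_triangle hT z (S.f k) (S.f N)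
    have hray : tdist hT (S.f k) (S.f N) = N - k := GRay.tdist_ray' hT S (by omega)
    rw [bval, ← hN]
    have : (0:ℤ) ≤ tdist hT z (S.f k) := by positivity
    push_cast
    omega
  · rw [bval_spec hT S z h]

end TreeToolkit

section EmbLemmas
variable {G : SimpleGraph V}

lemma isEmb_comp {g h : V → V} (hg : IsEmb G g) (hh : IsEmb G h) : IsEmb G (g ∘ h) :=
  ⟨hg.1.comp hh.1, fun u v huv => hg.2 _ _ (hh.2 _ _ huv)⟩

lemma isEmb_iterate {g : V → V} (hg : IsEmb G g) (n : ℕ) : IsEmb G (g^[n]) := by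
  induction n with
  | zero => exact ⟨fun a b h => h, fun u v huv => huv⟩
  | succ k ih =>
    have := isEmb_comp ih hg
    rw [Function.iterate_succ]
    exact ⟨this.1, this.2⟩

def embHom {g : V → V} (hg : IsEmb G g) : G →g G :=
  ⟨g, fun {a b} hab => hg.2 a b hab⟩

lemma geo_map (hT : G.IsTree) {g : V → V} (hg : IsEmb G g) (u v : V) :
    geo hT (g u) (g v) = (geo hT u v).map (embHom hg) :=
  (geo_unique hT _ (Walk.map_isPath_of_injective (f := embHom hg) (by exact hg.1) (geo_isPath hT u v))).symm

lemma tdist_map (hT : G.IsTree) {g : V → V} (hg : IsEmb G g) (u v : V) :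
    tdist hT (g u) (g v) = tdist hT u v := by
  rw [tdist, geo_map hT hg]
  show (Walk.map (embHom hg) (geo hT u v)).length = _
  rw [Walk.length_map]; rfl

lemma mem_geo_map (hT : G.IsTree) {g : V → V} (hg : IsEmb G g) {u v x : V}
    (hx : x ∈ (geo hT u v).support) :
    g x ∈ (geo hT (g u) (g v)).support := by
  have key : g x ∈ ((geo hT u v).map (embHom hg)).support := by
    rw [Walk.support_map, List.mem_map]
    exact ⟨x, hx, rfl⟩
  rw [geo_map hT hg]; exact key

end EmbLemmas

section RayLemmas
variable {G : SimpleGraph V}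

lemma GRay.ext' {R S : GRay G} (h : ∀ n, R.f n = S.f n) : R = S := by
  cases R; cases S
  have : _root_.GRay.f _ = _root_.GRay.f _ := funext h
  simp_all

def rayMap {g : V → V} (hg : IsEmb G g) (R : GRay G) : GRay G where
  f := fun n => g (R.f n)
  inj := fun a b hab => R.inj (hg.1 hab)
  adj := fun n => hg.2 _ _ (R.adj n)

@[simp] lemma rayMap_f {g : V → V} (hg : IsEmb G g) (R : GRay G) (n : ℕ) :
    (rayMap hg R).f n = g (R.f n) := rfl

/-- segment of a ray between two indices -/
def raySeg (R : GRay G) (i j : ℕ) (h : i ≤ j) : G.Walk (R.f i) (R.f j) :=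
  (R.walkLen i (j-i)).copy rfl (congrArg R.f (Nat.add_sub_cancel' h))

lemma mem_raySeg_iff (R : GRay G) {i j : ℕ} (h : i ≤ j) (x : V) :
    x ∈ (raySeg R i j h).support ↔ ∃ t, i ≤ t ∧ t ≤ j ∧ R.f t = x := by
  rw [raySeg, Walk.support_copy, GRay.mem_walkLen_iff]
  constructor
  · rintro ⟨t, ht, rfl⟩; exact ⟨i + t, by omega, by omega, rfl⟩
  · rintro ⟨t, ht1, ht2, rfl⟩; exact ⟨t - i, by omega, by rw [Nat.add_sub_cancel' ht1]⟩

lemma rayEquiv_symm {R S : GRay G} (h : RayEquiv G R S) : RayEquiv G S R := by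
  intro v
  obtain ⟨m, n, h1, h2, W, hW⟩ := h v
  exact ⟨n, m, h2, h1, W.reverse, by rwa [Walk.support_reverse, List.mem_reverse]⟩

lemma rayEquiv_trans {R S T : GRay G} (h1 : RayEquiv G R S) (h2 : RayEquiv G S T) :
    RayEquiv G R T := by
  intro v
  obtain ⟨m1, n1, ha1, ha2, W1, hW1⟩ := h1 v
  obtain ⟨m2, n2, hb1, hb2, W2, hW2⟩ := h2 v
  set K := max n1 m2 with hK
  have hn1K : n1 ≤ K := le_max_left _ _
  have hm2K : m2 ≤ K := le_max_right _ _
  refine ⟨m1, n2, ha1, hb2, W1.append ((raySeg S n1 K hn1K).append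
    ((raySeg S m2 K hm2K).reverse.append W2)), ?_⟩
  rw [Walk.mem_support_append_iff, Walk.mem_support_append_iff,
    Walk.mem_support_append_iff, Walk.support_reverse, List.mem_reverse]
  push_neg
  refine ⟨hW1, ?_, ?_, hW2⟩
  · intro hc
    rw [mem_raySeg_iff] at hc
    obtain ⟨t, ht1, ht2, rfl⟩ := hc
    exact ha2 t ht1 rfl
  · intro hc
    rw [mem_raySeg_iff] at hc
    obtain ⟨t, ht1, ht2, rfl⟩ := hc
    exact hb1 t ht1 rfl

lemma rayEquiv_congr {R R' S S' : GRay G} (hR : ∀ n, R.f n = R'.f n)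
    (hS : ∀ n, S.f n = S'.f n) (h : RayEquiv G R S) : RayEquiv G R' S' := by
  rw [GRay.ext' hR, GRay.ext' hS] at h
  exact h

lemma rayEquiv_map {g : V → V} (hg : IsEmb G g) {R S : GRay G} (h : RayEquiv G R S) :
    RayEquiv G (rayMap hg R) (rayMap hg S) := by
  intro v
  by_cases hv : ∃ u, g u = v
  · obtain ⟨u, rfl⟩ := hv
    obtain ⟨m, n, h1, h2, W, hW⟩ := h u
    refine ⟨m, n, fun i hi hx => h1 i hi (hg.1 hx), fun j hj hx => h2 j hj (hg.1 hx),
      W.map (embHom hg), ?_⟩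
    show g u ∉ (W.map (embHom hg)).support
    rw [Walk.support_map, List.mem_map]
    rintro ⟨x, hx, hgx⟩
    exact hW (by rwa [hg.1 hgx] at hx)
  · push_neg at hv
    obtain ⟨m, n, h1, h2, W, hW⟩ := h v
    exact ⟨m, n, fun i _ => hv _, fun j _ => hv _, W.map (embHom hg), by
      show v ∉ (W.map (embHom hg)).support
      rw [Walk.support_map, List.mem_map]
      rintro ⟨x, hx, hgx⟩
      exact hv x hgx⟩

end RayLemmas

section CommonTail
variable {G : SimpleGraph V}

lemma ray_index_step (hT : G.IsTree) (R : GRay G) {a b : ℕ}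
    (h : tdist hT (R.f a) (R.f b) = 1) : b = a + 1 ∨ a = b + 1 := by
  rcases Nat.le_total a b with hle | hle
  · have := GRay.tdist_ray' hT R hle; omega
  · have := GRay.tdist_ray' hT R hle; rw [tdist_comm] at this; omega

lemma commonTail (hT : G.IsTree) {R S : GRay G} (h : RayEquiv G R S) :
    ∃ p q : ℕ, ∀ t, R.f (p + t) = S.f (q + t) := by
  classical
  set N := rayStab hT S (R.f 0) with hN
  -- every tail vertex of S is on R
  have key : ∀ j, ∃ i, R.f i = S.f (N + j) := by
    intro j
    obtain ⟨m, n, hm, hn, W, hW⟩ := h (S.f (N + j))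
    have hjn : N + j < n := by
      by_contra hc
      push_neg at hc
      exact hn (N + j) hc rfl
    have hmem : S.f (N + j) ∈ (geo hT (R.f 0) (S.f n)).support := by
      rw [mem_geo_iff]
      have d1 := rayStab_dist hT S (R.f 0) (show N ≤ N + j by omega)
      have d2 := rayStab_dist hT S (R.f 0) (show N ≤ n by omega)
      have d3 := GRay.tdist_ray' hT S (show N + j ≤ n by omega)
      omega
    have hsub := mem_walk_of_mem_geo hT hmem ((raySeg R 0 m (Nat.zero_le m)).append W)
    rw [Walk.mem_support_append_iff] at hsub
    rcases hsub with hc | hc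
    · rw [mem_raySeg_iff] at hc
      obtain ⟨t, _, _, ht⟩ := hc
      exact ⟨t, ht⟩
    · exact absurd hc hW
  choose φ hφ using key
  -- each step of φ is ±1
  have hstep : ∀ j, φ (j+1) = φ j + 1 ∨ φ j = φ (j+1) + 1 := by
    intro j
    apply ray_index_step hT R
    rw [hφ j, hφ (j+1)]
    have : N + (j+1) = (N+j) + 1 := by omega
    rw [this]
    exact tdist_adj hT (S.adj (N+j))
  -- a down step propagates
  have hdownprop : ∀ j, φ j = φ (j+1) + 1 → φ (j+1) = φ (j+1+1) + 1 := by
    intro j hdown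
    rcases hstep (j+1) with hup | h2
    · exfalso
      have heq : φ (j+1+1) = φ j := by omega
      have : S.f (N + (j+1+1)) = S.f (N + j) := by
        rw [← hφ (j+1+1), ← hφ j, heq]
      have := S.inj this
      omega
    · exact h2
  -- hence no down step at all
  have hup : ∀ j, φ (j+1) = φ j + 1 := by
    intro j
    rcases hstep j with hup | hdown
    · exact hup
    · exfalso
      have hall : ∀ t, φ (j + t) = φ (j + t + 1) + 1 := by
        intro t
        induction t with
        | zero => exact hdown
        | succ k ih => exact hdownprop (j + k) ih
      have hlin : ∀ t, φ (j + t) + t ≤ φ j := by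
        intro t
        induction t with
        | zero => simp
        | succ k ih =>
          have := hall k
          have : φ (j + k) = φ (j + (k+1)) + 1 := by
            have e : j + k + 1 = j + (k+1) := by omega
            rw [← e]; exact hall k
          omega
      have := hlin (φ j + 1)
      omega
  have hlin : ∀ t, φ t = φ 0 + t := by
    intro t
    induction t with
    | zero => rfl
    | succ k ih => rw [hup k, ih]; omega
  exact ⟨φ 0, N, fun t => by rw [← hφ t, hlin t]⟩

end CommonTail

section Shift
variable {G : SimpleGraph V}

/-- an embedding fixing the end of R0 eventually shifts R0 -/
lemma fixesEnd_shift (hT : G.IsTree) {g : V → V} (hg : IsEmb G g) {R0 : GRay G}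
    (hfix : FixesEnd G g R0) :
    ∃ a b : ℕ, ∀ t, g (R0.f (a + t)) = R0.f (b + t) := by
  obtain ⟨S, hS, hSR⟩ := hfix
  have hequiv : RayEquiv G (rayMap hg R0) R0 :=
    rayEquiv_congr (fun n => hS n) (fun n => rfl) hSR
  obtain ⟨p, q, hpq⟩ := commonTail hT hequiv
  exact ⟨p, q, hpq⟩

/-- Busemann cocycle -/
lemma bval_shift (hT : G.IsTree) {g : V → V} (hg : IsEmb G g) (R0 : GRay G)
    {a b : ℕ} (hsh : ∀ t, g (R0.f (a + t)) = R0.f (b + t)) (z : V) :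
    bval hT R0 (g z) = bval hT R0 z + ((b : ℤ) - a) := by
  set t := max (rayStab hT R0 z) (rayStab hT R0 (g z)) with ht
  have h1 : (a + t : ℤ) - tdist hT z (R0.f (a + t)) = bval hT R0 z :=
    bval_spec hT R0 z (by omega)
  have h2 : (b + t : ℤ) - tdist hT (g z) (R0.f (b + t)) = bval hT R0 (g z) :=
    bval_spec hT R0 (g z) (by omega)
  have h3 : tdist hT (g z) (R0.f (b + t)) = tdist hT z (R0.f (a + t)) := by
    rw [← hsh t, tdist_map hT hg]
  rw [← h2, h3, ← h1]
  push_cast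
  ring

end Shift

section Axis
variable {G : SimpleGraph V}

def axisF (g : V → V) (R0 : GRay G) (a τ : ℕ) : ℕ → V :=
  fun s => g^[s / τ] (R0.f (a - s % τ))

variable (hT : G.IsTree) (R0 : GRay G) {g : V → V}

lemma shift' (hg : IsEmb G g) {a b : ℕ} (hba : b < a)
    (hsh : ∀ t, g (R0.f (a + t)) = R0.f (b + t)) :
    ∀ i, a ≤ i → g (R0.f i) = R0.f (i - (a - b)) := by
  intro i hi
  have := hsh (i - a)
  rw [show a + (i - a) = i by omega] at this
  rw [this]
  congr 1
  omega

lemma axis_iter (hg : IsEmb G g) {a b : ℕ} (hba : b < a)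
    (hsh : ∀ t, g (R0.f (a + t)) = R0.f (b + t)) :
    ∀ n k, a ≤ k + (a - b) → g^[n] (R0.f (k + n * (a - b))) = R0.f k := by
  intro n
  induction n with
  | zero => intro k _; simp
  | succ n ih =>
    intro k hk
    rw [Function.iterate_succ_apply]
    have hstep := shift' R0 hg hba hsh (k + (n+1) * (a-b))
      (by rw [Nat.succ_mul]; omega)
    rw [hstep, show k + (n+1)*(a-b) - (a-b) = k + n * (a-b) by rw [Nat.succ_mul]; omega]
    exact ih k hk

lemma axisF_eq {a b : ℕ} (hba : b < a) (q r : ℕ) (hr : r < a - b) :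
    axisF g R0 a (a-b) (q * (a-b) + r) = g^[q] (R0.f (a - r)) := by
  rw [axisF]
  congr 1
  · congr 1
    rw [Nat.add_comm, Nat.add_mul_div_right _ _ (by omega : 0 < a - b),
      Nat.div_eq_of_lt hr]
    omega
  · congr 1
    rw [Nat.add_comm, Nat.add_mul_mod_self_right, Nat.mod_eq_of_lt hr]

lemma axisF_decomp {a b : ℕ} (hba : b < a) (s : ℕ) :
    ∃ q r, r < a - b ∧ s = q * (a-b) + r ∧
      axisF g R0 a (a-b) s = g^[q] (R0.f (a - r)) := by
  have hpos : 0 < a - b := by omega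
  have hmod := Nat.mod_lt s hpos
  have hdm := Nat.div_add_mod s (a-b)
  have hcomm : (a-b) * (s/(a-b)) = s/(a-b) * (a-b) := Nat.mul_comm _ _
  refine ⟨s / (a-b), s % (a-b), hmod, by omega, ?_⟩
  conv_lhs => rw [show s = s / (a-b) * (a-b) + s % (a-b) by omega]
  exact axisF_eq R0 hba _ _ hmod

lemma axis_dist (hg : IsEmb G g) {a b : ℕ} (hba : b < a)
    (hsh : ∀ t, g (R0.f (a + t)) = R0.f (b + t)) :
    ∀ s k, a ≤ k → tdist hT (axisF g R0 a (a-b) s) (R0.f k) = (k - a) + s := by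
  intro s k hk
  obtain ⟨q, r, hr, hs, heq⟩ := axisF_decomp R0 hba s
  rw [heq, ← axis_iter R0 hg hba hsh q k (by omega), tdist_map hT (isEmb_iterate hg q)]
  rw [GRay.tdist_ray' hT R0 (by omega)]
  omega

lemma axis_adj (hg : IsEmb G g) {a b : ℕ} (hba : b < a)
    (hsh : ∀ t, g (R0.f (a + t)) = R0.f (b + t)) :
    ∀ s, G.Adj (axisF g R0 a (a-b) s) (axisF g R0 a (a-b) (s+1)) := by
  intro s
  obtain ⟨q, r, hr, hs, heq⟩ := axisF_decomp R0 hba s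
  rcases Nat.lt_or_ge (r+1) (a-b) with hcase | hcase
  · have heq2 : axisF g R0 a (a-b) (s+1) = g^[q] (R0.f (a - (r+1))) := by
      rw [hs, show q * (a-b) + r + 1 = q * (a-b) + (r+1) by omega]
      exact axisF_eq R0 hba q (r+1) hcase
    rw [heq, heq2]
    apply (isEmb_iterate hg q).2
    have := (R0.adj (a - (r+1))).symm
    rwa [show a - (r+1) + 1 = a - r by omega] at this
  · -- r + 1 = a - b : block boundary
    have hr1 : r + 1 = a - b := by omega
    have heq2 : axisF g R0 a (a-b) (s+1) = g^[q+1] (R0.f a) := by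
      rw [hs, show q * (a-b) + r + 1 = (q+1) * (a-b) + 0 by rw [Nat.succ_mul]; omega]
      have := axisF_eq (g := g) R0 hba (q+1) 0 (by omega)
      rwa [Nat.sub_zero] at this
    have heq3 : g^[q+1] (R0.f a) = g^[q] (R0.f b) := by
      rw [Function.iterate_succ_apply]
      congr 1
      have := hsh 0
      simpa using this
    rw [heq, heq2, heq3]
    apply (isEmb_iterate hg q).2
    have := (R0.adj b).symm
    rwa [show b + 1 = a - r by omega] at this

include hT in
lemma axis_inj (hg : IsEmb G g) {a b : ℕ} (hba : b < a)
    (hsh : ∀ t, g (R0.f (a + t)) = R0.f (b + t)) :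
    Function.Injective (axisF g R0 a (a-b)) := by
  intro s t hst
  have h1 := axis_dist hT R0 hg hba hsh s a (le_refl a)
  have h2 := axis_dist hT R0 hg hba hsh t a (le_refl a)
  rw [hst] at h1
  omega

include hT in
def axisRay (hg : IsEmb G g) {a b : ℕ} (hba : b < a)
    (hsh : ∀ t, g (R0.f (a + t)) = R0.f (b + t)) : GRay G :=
  ⟨axisF g R0 a (a-b), axis_inj hT R0 hg hba hsh, axis_adj R0 hg hba hsh⟩

lemma axisRay_f (hg : IsEmb G g) {a b : ℕ} (hba : b < a)
    (hsh : ∀ t, g (R0.f (a + t)) = R0.f (b + t)) (s : ℕ) :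
    (axisRay hT R0 hg hba hsh).f s = axisF g R0 a (a-b) s := rfl

lemma axis_g (hg : IsEmb G g) {a b : ℕ} (hba : b < a)
    (hsh : ∀ t, g (R0.f (a + t)) = R0.f (b + t)) (s : ℕ) :
    g (axisF g R0 a (a-b) s) = axisF g R0 a (a-b) (s + (a-b)) := by
  obtain ⟨q, r, hr, hs, heq⟩ := axisF_decomp R0 hba s
  have heq2 : axisF g R0 a (a-b) (s + (a-b)) = g^[q+1] (R0.f (a-r)) := by
    rw [hs, show q * (a-b) + r + (a-b) = (q+1) * (a-b) + r by ring]
    exact axisF_eq R0 hba (q+1) r hr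
  rw [heq, heq2, Function.iterate_succ_apply']

lemma axis_g_iter (hg : IsEmb G g) {a b : ℕ} (hba : b < a)
    (hsh : ∀ t, g (R0.f (a + t)) = R0.f (b + t)) (n s : ℕ) :
    g^[n] (axisF g R0 a (a-b) s) = axisF g R0 a (a-b) (s + n * (a-b)) := by
  induction n with
  | zero => simp
  | succ n ih =>
    rw [Function.iterate_succ_apply', ih, axis_g R0 hg hba hsh]
    congr 1
    ring

end Axis

section Behind
variable {G : SimpleGraph V}

lemma mem_geo_chain (hT : G.IsTree) {w x y z : V}
    (hx : x ∈ (geo hT w y).support) (hz : z ∈ (geo hT w x).support) :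
    x ∈ (geo hT z y).support ∧ z ∈ (geo hT w y).support := by
  rw [mem_geo_iff] at hx hz ⊢
  have t1 := tdist_triangle hT z x y
  have t2 := tdist_triangle hT w z y
  constructor
  · omega
  · rw [mem_geo_iff]; omega

def Behind (hT : G.IsTree) (R0 : GRay G) (g : V → V) (a τ t : ℕ) (z : V) : Prop :=
  ∃ K, ∀ k, K ≤ k → a ≤ k → axisF g R0 a τ t ∈ (geo hT z (R0.f k)).support

variable (hT : G.IsTree) (R0 : GRay G) {g : V → V} (hg : IsEmb G g)
  {a b : ℕ} (hba : b < a) (hsh : ∀ t, g (R0.f (a + t)) = R0.f (b + t))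

lemma behind_self (t : ℕ) : Behind hT R0 g a (a-b) t (axisF g R0 a (a-b) t) :=
  ⟨0, fun k _ _ => Walk.start_mem_support _⟩

include hg hba hsh

/-- membership of axis points along geodesics to the ray -/
lemma axis_mem_geo {s t : ℕ} (hst : s ≤ t) {k : ℕ} (hk : a ≤ k) :
    axisF g R0 a (a-b) s ∈ (geo hT (axisF g R0 a (a-b) t) (R0.f k)).support := by
  rw [mem_geo_iff]
  rw [axis_dist hT R0 hg hba hsh t k hk, axis_dist hT R0 hg hba hsh s k hk]
  have h1 : tdist hT (axisF g R0 a (a-b) t) (axisF g R0 a (a-b) s) = t - s := by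
    rw [tdist_comm]
    exact GRay.tdist_ray' hT (axisRay hT R0 hg hba hsh) hst
  omega

lemma behind_mono {s t : ℕ} (hst : s ≤ t) {z : V}
    (h : Behind hT R0 g a (a-b) t z) : Behind hT R0 g a (a-b) s z := by
  obtain ⟨K, hK⟩ := h
  refine ⟨K, fun k hk hak => ?_⟩
  exact mem_geo_trans hT (hK k hk hak) (axis_mem_geo hT R0 hg hba hsh hst hak)

lemma behind_bound {t : ℕ} {z : V} (h : Behind hT R0 g a (a-b) t z) :
    (t : ℤ) + bval hT R0 z ≤ a := by
  obtain ⟨K, hK⟩ := h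
  set k := max (max K (rayStab hT R0 z)) a with hk
  have hmem := hK k (by omega) (by omega)
  rw [mem_geo_iff] at hmem
  have hb : (k : ℤ) - tdist hT z (R0.f k) = bval hT R0 z :=
    bval_spec hT R0 z (by omega)
  have hax : tdist hT (axisF g R0 a (a-b) t) (R0.f k) = (k - a) + t :=
    axis_dist hT R0 hg hba hsh t k (by omega)
  have h0 : (0:ℤ) ≤ tdist hT z (axisF g R0 a (a-b) t) := by positivity
  have hka : a ≤ k := by omega
  -- hmem : tdist z (R0.f k) = tdist z (axisF t) + ((k-a)+t)
  rw [hax] at hmem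
  have : ((k:ℤ) - a) + t ≤ tdist hT z (R0.f k) := by
    rw [hmem]; push_cast; omega
  omega

/-- vertices on a geodesic from a behind-point to the axis are behind -/
lemma behind_geo {t : ℕ} {w z : V} (hw : Behind hT R0 g a (a-b) t w)
    (hz : z ∈ (geo hT w (axisF g R0 a (a-b) t)).support) :
    Behind hT R0 g a (a-b) t z := by
  obtain ⟨K, hK⟩ := hw
  exact ⟨K, fun k hk hak => (mem_geo_chain hT (hK k hk hak) hz).1⟩

lemma behind_axis_vertex {t i : ℕ} (hti : t ≤ i) :
    Behind hT R0 g a (a-b) t (axisF g R0 a (a-b) i) :=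
  behind_mono hT R0 hg hba hsh hti (behind_self hT R0 i)

end Behind

section AxisEnds
variable {G : SimpleGraph V}
variable (hT : G.IsTree) (R0 : GRay G) {g : V → V} (hg : IsEmb G g)
  {a b : ℕ} (hba : b < a) (hsh : ∀ t, g (R0.f (a + t)) = R0.f (b + t))

lemma axisF_zero : axisF g R0 a (a-b) 0 = R0.f a := by
  rw [axisF, Nat.zero_div, Nat.zero_mod, Nat.sub_zero, Function.iterate_zero_apply]

include hT hg hba hsh in
lemma not_elliptic_of_shift : ¬ Elliptic G g := by
  have key : ∀ (p : ℕ) (v : V), 1 ≤ p → g^[p] v = v → False := by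
    intro p v hp hv
    set y := axisF g R0 a (a-b) 0 with hy
    set ρ := tdist hT v y with hρ
    set n := 2 * ρ + 1 with hn
    have hfix : g^[p * n] v = v := by
      rw [Function.iterate_mul]
      exact Function.iterate_fixed hv n
    have h1 : tdist hT v (axisF g R0 a (a-b) (0 + (p*n) * (a-b))) = ρ := by
      rw [← axis_g_iter R0 hg hba hsh (p*n) 0, ← hy]
      conv_lhs => rw [← hfix]
      exact tdist_map hT (isEmb_iterate hg (p*n)) v y
    have h2 : tdist hT y (axisF g R0 a (a-b) (0 + (p*n) * (a-b))) = (p*n) * (a-b) := by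
      have := GRay.tdist_ray' hT (axisRay hT R0 hg hba hsh)
        (show 0 ≤ 0 + (p*n)*(a-b) by omega)
      simpa [axisRay_f] using this
    have htri := tdist_triangle hT y v (axisF g R0 a (a-b) (0 + (p*n) * (a-b)))
    rw [h1, h2, tdist_comm hT y v, ← hρ] at htri
    have hbig : n ≤ p * n * (a-b) := by
      calc n ≤ p * n := Nat.le_mul_of_pos_left n (by omega)
      _ = p * n * 1 := by ring
      _ ≤ p * n * (a-b) := Nat.mul_le_mul_left _ (by omega)
    omega
  rintro (⟨v, hv⟩ | ⟨u, w, hadj, hc⟩)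
  · exact key 1 v (le_refl 1) (by simpa using hv)
  · rcases hc with ⟨h1, _⟩ | ⟨h1, h2⟩
    · exact key 1 u (le_refl 1) (by simpa using h1)
    · refine key 2 u (by omega) ?_
      show g (g u) = u
      rw [h1, h2]

include hg hba hsh in
lemma fixesEnd_axis : FixesEnd G g (axisRay hT R0 hg hba hsh) := by
  set Q := axisRay hT R0 hg hba hsh with hQ
  refine ⟨rayMap hg Q, fun n => rfl, ?_⟩
  intro v
  obtain ⟨N1, hN1⟩ := GRay.tail_avoid Q v
  have hmap : ∀ i, (rayMap hg Q).f i = Q.f (i + (a-b)) := fun i =>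
    axis_g R0 hg hba hsh i
  refine ⟨N1, N1, ?_, fun j hj => hN1 j hj, ?_⟩
  · intro i hi
    rw [hmap i]
    exact hN1 _ (by omega)
  · refine ⟨((raySeg Q N1 (N1 + (a-b)) (by omega)).reverse.copy (hmap N1).symm rfl), ?_⟩
    rw [Walk.support_copy, Walk.support_reverse, List.mem_reverse, mem_raySeg_iff]
    rintro ⟨t, ht1, _, rfl⟩
    exact hN1 t ht1 rfl

include hg hba hsh in
lemma not_equiv_axis_R0 : ¬ RayEquiv G (axisRay hT R0 hg hba hsh) R0 := by
  intro h
  set Q := axisRay hT R0 hg hba hsh with hQ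
  obtain ⟨m, n, h1, h2, W, hW⟩ := h (Q.f 0)
  have hm : 1 ≤ m := by
    by_contra hc
    exact h1 0 (by omega) rfl
  have hQ0 : Q.f 0 = R0.f a := axisF_zero R0
  have hn : a < n := by
    by_contra hc
    exact h2 a (by omega) hQ0.symm
  have hmem : Q.f 0 ∈ (geo hT (Q.f m) (R0.f n)).support := by
    rw [mem_geo_iff]
    have d1 : tdist hT (Q.f m) (R0.f n) = (n - a) + m :=
      axis_dist hT R0 hg hba hsh m n (by omega)
    have d2 : tdist hT (Q.f m) (Q.f 0) = m := by
      rw [tdist_comm]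
      have := GRay.tdist_ray' hT Q (Nat.zero_le m)
      omega
    have d3 : tdist hT (Q.f 0) (R0.f n) = n - a := by
      rw [hQ0]
      exact GRay.tdist_ray' hT R0 (by omega)
    omega
  exact hW (mem_walk_of_mem_geo hT hmem W)

include hg hba hsh in
/-- iterates of g push ray vertices onto the axis -/
lemma gn_ray_to_axis {K : ℕ} (hK : a ≤ K) :
    ∃ m r, r < a - b ∧ ∀ n, m ≤ n →
      g^[n] (R0.f K) = axisF g R0 a (a-b) (r + (n - m) * (a-b)) := by
  have hpos : 0 < a - b := by omega
  set c := K - a with hc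
  have key : ∀ m r, r < a - b → m * (a-b) = c + r →
      ∀ n, m ≤ n → g^[n] (R0.f K) = axisF g R0 a (a-b) (r + (n - m) * (a-b)) := by
    intro m r hr hmr n hn
    have hKdecomp : K = (a - r) + m * (a-b) := by omega
    have hbase : g^[m] (R0.f K) = R0.f (a - r) := by
      rw [hKdecomp]
      exact axis_iter R0 hg hba hsh m (a - r) (by omega)
    have haxis : R0.f (a - r) = axisF g R0 a (a-b) r := by
      have := axisF_eq (g := g) R0 hba 0 r hr
      simpa using this.symm
    have : g^[n] (R0.f K) = g^[n - m] (g^[m] (R0.f K)) := by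
      rw [← Function.iterate_add_apply]
      congr 1
      omega
    rw [this, hbase, haxis, axis_g_iter R0 hg hba hsh (n - m) r]
  have hdm := Nat.div_add_mod c (a-b)
  have hcomm : (a-b) * (c/(a-b)) = c/(a-b) * (a-b) := Nat.mul_comm _ _
  have hmodlt := Nat.mod_lt c hpos
  by_cases hmod : c % (a-b) = 0
  · exact ⟨c / (a-b), 0, hpos, key _ _ hpos (by omega)⟩
  · refine ⟨c / (a-b) + 1, (a-b) - c % (a-b), by omega, key _ _ (by omega) ?_⟩
    rw [Nat.succ_mul]
    omega

end AxisEnds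

section Unique
variable {G : SimpleGraph V}

lemma rayEquiv_refl (S : GRay G) : RayEquiv G S S := by
  intro v
  obtain ⟨N1, hN1⟩ := GRay.tail_avoid S v
  refine ⟨N1, N1, hN1, hN1, Walk.nil, ?_⟩
  rw [Walk.support_nil, List.mem_singleton]
  exact fun hc => hN1 N1 (le_refl _) hc.symm

lemma rayEquiv_iterate {g : V → V} (hg : IsEmb G g) {S : GRay G}
    (hgS : RayEquiv G (rayMap hg S) S) (n : ℕ) :
    RayEquiv G S (rayMap (isEmb_iterate hg n) S) := by
  induction n with
  | zero =>
    exact rayEquiv_congr (fun n => rfl) (fun n => rfl) (rayEquiv_refl S)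
  | succ n ih =>
    have hmap := rayEquiv_map hg ih
    have htrans := rayEquiv_trans (rayEquiv_symm hgS) hmap
    refine rayEquiv_congr (fun i => rfl) (fun i => ?_) htrans
    show g (g^[n] (S.f i)) = g^[n+1] (S.f i)
    rw [Function.iterate_succ_apply']

variable (hT : G.IsTree) (R0 : GRay G) {g : V → V} (hg : IsEmb G g)
  {a b : ℕ} (hba : b < a) (hsh : ∀ t, g (R0.f (a + t)) = R0.f (b + t))

include hg hba hsh in
lemma fixed_ends_unique (S : GRay G) (hfixS : FixesEnd G g S)
    (hnR0 : ¬ RayEquiv G S R0) : RayEquiv G S (axisRay hT R0 hg hba hsh) := by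
  classical
  obtain ⟨S', hS', hS'S⟩ := hfixS
  have hgS : RayEquiv G (rayMap hg S) S :=
    rayEquiv_congr (fun n => hS' n) (fun n => rfl) hS'S
  -- separator between S and R0
  rw [RayEquiv] at hnR0
  push_neg at hnR0
  obtain ⟨x₀, hx₀⟩ := hnR0
  obtain ⟨J₀, hJ₀⟩ := GRay.tail_avoid S x₀
  obtain ⟨K₀, hK₀⟩ := GRay.tail_avoid R0 x₀
  have hsep : ∀ j k, J₀ ≤ j → K₀ ≤ k →
      x₀ ∈ (geo hT (S.f j) (R0.f k)).support := by
    intro j k hj hk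
    exact hx₀ j k (fun i hi => hJ₀ i (by omega)) (fun i hi => hK₀ i (by omega))
      (geo hT (S.f j) (R0.f k))
  set KK := max (max (rayStab hT R0 x₀) a) K₀ with hKK
  have hKKa : a ≤ KK := by omega
  have hKKmem : ∀ k, KK ≤ k → R0.f KK ∈ (geo hT x₀ (R0.f k)).support := by
    intro k hk
    rw [mem_geo_iff]
    have d1 := rayStab_dist hT R0 x₀ (show rayStab hT R0 x₀ ≤ KK by omega)
    have d2 := rayStab_dist hT R0 x₀ (show rayStab hT R0 x₀ ≤ k by omega)
    have d3 := GRay.tdist_ray' hT R0 (show KK ≤ k by omega)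
    omega
  obtain ⟨mm, rr, hrr, hmr⟩ := gn_ray_to_axis R0 hg hba hsh hKKa
  -- the transport of the branch behind x₀
  have hbeh : ∀ n j, mm ≤ n → J₀ ≤ j →
      Behind hT R0 g a (a-b) (rr + (n-mm)*(a-b)) (g^[n] (S.f j)) := by
    intro n j hn hj
    refine ⟨max KK K₀, fun k hk hak => ?_⟩
    have hx0mem : x₀ ∈ (geo hT (S.f j) (R0.f (k + n * (a-b)))).support :=
      hsep j (k + n*(a-b)) hj (by omega)
    have h1 := mem_geo_map hT (isEmb_iterate hg n) hx0mem
    rw [axis_iter R0 hg hba hsh n k (by omega)] at h1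
    have hKKm : R0.f KK ∈ (geo hT x₀ (R0.f (k + n * (a-b)))).support :=
      hKKmem (k + n*(a-b)) (by omega)
    have h2 := mem_geo_map hT (isEmb_iterate hg n) hKKm
    rw [axis_iter R0 hg hba hsh n k (by omega), hmr n hn] at h2
    exact mem_geo_trans hT h1 h2
  -- now build the equivalence
  intro v
  set Q := axisRay hT R0 hg hba hsh with hQdef
  set sv := (a - bval hT R0 v).toNat + 1 with hsv
  have hnbv : ∀ t, sv ≤ t → ¬ Behind hT R0 g a (a-b) t v := by
    intro t ht hbv
    have hb := behind_bound hT R0 hg hba hsh hbv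
    have h1 : ((a : ℤ) - bval hT R0 v) ≤ ((a - bval hT R0 v).toNat : ℤ) :=
      Int.self_le_toNat _
    have h2 : (sv : ℤ) ≤ (t : ℤ) := by exact_mod_cast ht
    rw [hsv] at h2
    push_cast at h2
    omega
  have hQv : ∀ i, sv ≤ i → Q.f i ≠ v := by
    intro i hi heq
    exact hnbv i hi (heq ▸ behind_self hT R0 i)
  set n := mm + sv with hn
  set t := rr + sv * (a-b) with ht
  have htsv : sv ≤ t := by
    have : sv * 1 ≤ sv * (a-b) := Nat.mul_le_mul_left _ (by omega)
    omega
  have hSSn := rayEquiv_iterate hg hgS n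
  set Sn := rayMap (isEmb_iterate hg n) S with hSn
  obtain ⟨m1, n1, t1, t2, W1, hW1⟩ := hSSn v
  set j := max n1 J₀ with hj
  have hbehSnj : Behind hT R0 g a (a-b) t (Sn.f j) := by
    have := hbeh n j (by omega) (by omega)
    rwa [show n - mm = sv by omega] at this
  set W2 := geo hT (Sn.f j) (axisF g R0 a (a-b) t) with hW2def
  have hW2 : v ∉ W2.support := by
    intro hv
    exact hnbv t htsv (behind_geo hT R0 hg hba hsh hbehSnj hv)
  refine ⟨m1, t, t1, fun i hi => hQv i (by omega),
    (W1.append (raySeg Sn n1 j (le_max_left _ _))).append W2, ?_⟩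
  show v ∉ ((W1.append (raySeg Sn n1 j (le_max_left _ _))).append W2).support
  rw [Walk.mem_support_append_iff, Walk.mem_support_append_iff]
  push_neg
  refine ⟨⟨hW1, ?_⟩, hW2⟩
  intro hc
  rw [mem_raySeg_iff] at hc
  obtain ⟨i, hi1, _, heq⟩ := hc
  exact t2 i hi1 heq

end Unique

section Final
variable {G : SimpleGraph V}

lemma hyperbolic_of_shift (hT : G.IsTree) (R0 : GRay G) {g : V → V} (hg : IsEmb G g)
    {a b : ℕ} (hba : b < a) (hsh : ∀ t, g (R0.f (a + t)) = R0.f (b + t))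
    (hfixR0 : FixesEnd G g R0) : Hyperbolic G g := by
  refine ⟨not_elliptic_of_shift hT R0 hg hba hsh,
    axisRay hT R0 hg hba hsh, R0,
    not_equiv_axis_R0 hT R0 hg hba hsh,
    fixesEnd_axis hT R0 hg hba hsh,
    hfixR0, ?_⟩
  intro S hS
  by_cases hc : RayEquiv G S R0
  · exact Or.inr hc
  · exact Or.inl (fixed_ends_unique hT R0 hg hba hsh S hS hc)

theorem stmt15' (hT : G.IsTree) (M : Set (V → V))
    (hM : IsEmbMonoid G M) (v0 : V)
    (h2 : ∃ R1 R2 : GRay G, InLimitSet G M v0 R1 ∧ InLimitSet G M v0 R2 ∧ ¬ RayEquiv G R1 R2)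
    (hfix : ∃ R0 : GRay G, ∀ g ∈ M, FixesEnd G g R0) :
    ∃ g ∈ M, Hyperbolic G g := by
  classical
  obtain ⟨R0, hfix⟩ := hfix
  obtain ⟨R1, R2, hL1, hL2, hR12⟩ := h2
  have hpick : ∃ R : GRay G, InLimitSet G M v0 R ∧ ¬ RayEquiv G R R0 := by
    by_cases hc : RayEquiv G R1 R0
    · exact ⟨R2, hL2, fun hc2 => hR12 (rayEquiv_trans hc (rayEquiv_symm hc2))⟩
    · exact ⟨R1, hL1, hc⟩
  obtain ⟨R, hRL, hRR0⟩ := hpick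
  rw [RayEquiv] at hRR0
  push_neg at hRR0
  obtain ⟨xs, hxs⟩ := hRR0
  obtain ⟨M0, hM0⟩ := GRay.tail_avoid R0 xs
  obtain ⟨N0, hN0⟩ := GRay.tail_avoid R xs
  have hsep : ∀ n m, M0 ≤ m → N0 ≤ n → xs ∈ (geo hT (R.f n) (R0.f m)).support := by
    intro n m hm hn
    exact hxs n m (fun i hi => hN0 i (by omega)) (fun j hj => hM0 j (by omega)) (geo hT (R.f n) (R0.f m))
  set js := rayStab hT R xs with hjs
  -- choose N
  set N := js + N0 + ((bval hT R0 xs - bval hT R0 v0).toNat + 1) with hN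
  obtain ⟨g, hgM, hInc⟩ := hRL (R.f N)
  obtain ⟨m, htail, p, hp⟩ := hInc
  have hmN : N < m := by
    by_contra hc
    exact htail N (by omega) rfl
  have hgEmb := hM.1 g hgM
  obtain ⟨aa, bb, hshift⟩ := fixesEnd_shift hT hgEmb (hfix g hgM)
  by_cases hba : bb < aa
  · exact ⟨g, hgM, hyperbolic_of_shift hT R0 hgEmb hba hshift (hfix g hgM)⟩
  exfalso
  push_neg at hba
  -- Busemann cocycle: bval(g v0) ≥ bval v0
  have hcoc := bval_shift hT hgEmb R0 hshift v0
  -- uniform threshold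
  set K1 := max (max M0 (rayStab hT R0 xs))
      (max (rayStab hT R0 (R.f N)) (rayStab hT R0 (g v0))) with hK1
  -- R.f N lies on the geodesic from g v0 towards the fixed end
  have hRN : ∀ k, K1 ≤ k → R.f N ∈ (geo hT (g v0) (R0.f k)).support := by
    intro k hk
    by_contra hc
    have hmemRN : R.f N ∈ (geo hT (R.f m) (R0.f k)).support := by
      have s1 : xs ∈ (geo hT (R.f m) (R0.f k)).support :=
        hsep m k (by omega) (by omega)
      have s2 : xs ∈ (geo hT (R.f N) (R0.f k)).support :=
        hsep N k (by omega) (by omega)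
      have s3 : R.f N ∈ (geo hT xs (R.f m)).support := by
        rw [mem_geo_iff]
        have d1 := rayStab_dist hT R xs (show js ≤ N by omega)
        have d2 := rayStab_dist hT R xs (show js ≤ m by omega)
        have d3 := GRay.tdist_ray' hT R (show N ≤ m by omega)
        omega
      rw [mem_geo_iff] at s1 s2 s3 ⊢
      rw [tdist_comm hT xs (R.f m)] at s3
      have c1 := tdist_comm hT (R.f m) xs
      have c2 := tdist_comm hT (R.f N) xs
      have c3 := tdist_comm hT (R.f m) (R.f N)
      omega
    have hW : R.f N ∈ (p.reverse.append (geo hT (g v0) (R0.f k))).support :=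
      mem_walk_of_mem_geo hT hmemRN _
    rw [Walk.mem_support_append_iff, Walk.support_reverse, List.mem_reverse] at hW
    rcases hW with h | h
    · exact hp h
    · exact hc h
  -- Busemann bounds
  have hb1 : bval hT R0 (g v0) ≤ bval hT R0 (R.f N) := by
    have hmem := hRN K1 (le_refl _)
    rw [mem_geo_iff] at hmem
    have e1 : (K1 : ℤ) - tdist hT (g v0) (R0.f K1) = bval hT R0 (g v0) :=
      bval_spec hT R0 (g v0) (by omega)
    have e2 : (K1 : ℤ) - tdist hT (R.f N) (R0.f K1) ≤ bval hT R0 (R.f N) :=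
      bval_ub hT R0 (R.f N) K1
    have h0 : (0:ℤ) ≤ tdist hT (g v0) (R.f N) := by positivity
    rw [← e1]
    push_cast [hmem]
    omega
  have hb2 : bval hT R0 (R.f N) ≤ bval hT R0 xs - (N - js : ℕ) := by
    have s2 : xs ∈ (geo hT (R.f N) (R0.f K1)).support :=
      hsep N K1 (by omega) (by omega)
    rw [mem_geo_iff] at s2
    have e1 : (K1 : ℤ) - tdist hT (R.f N) (R0.f K1) = bval hT R0 (R.f N) :=
      bval_spec hT R0 (R.f N) (by omega)
    have e2 : (K1 : ℤ) - tdist hT xs (R0.f K1) = bval hT R0 xs :=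
      bval_spec hT R0 xs (by omega)
    have d1 := rayStab_dist hT R xs (show js ≤ N by omega)
    have c2 := tdist_comm hT (R.f N) xs
    have hge : (N - js : ℕ) ≤ (tdist hT (R.f N) xs : ℤ) := by
      push_cast
      omega
    rw [← e1, ← e2]
    push_cast [s2]
    omega
  have htoNat : (bval hT R0 xs - bval hT R0 v0 : ℤ) ≤
      ((bval hT R0 xs - bval hT R0 v0).toNat : ℤ) := Int.self_le_toNat _
  have hNjs : ((N - js : ℕ) : ℤ) = (N0 : ℤ) + ((bval hT R0 xs - bval hT R0 v0).toNat + 1) := by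
    push_cast [hN]
    omega
  have haabb : (0:ℤ) ≤ (bb : ℤ) - aa := by
    have : (aa:ℤ) ≤ bb := by exact_mod_cast hba
    omega
  omega

end Final

theorem stmt15 (G : SimpleGraph V) (hT : G.IsTree) (M : Set (V → V))
    (hM : IsEmbMonoid G M) (v0 : V)
    (h2 : ∃ R1 R2 : GRay G, InLimitSet G M v0 R1 ∧ InLimitSet G M v0 R2 ∧ ¬ RayEquiv G R1 R2)
    (hfix : ∃ R0 : GRay G, ∀ g ∈ M, FixesEnd G g R0) :
    ∃ g ∈ M, Hyperbolic G g := by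
  exact stmt15' hT M hM v0 h2 hfix
end
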